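/- arXiv:1705.06547 — 9 statements merged into one kernel-verified Lean document; each statement's English description precedes it below -/
import Mathlib

section
/- For all x > 0, ψ'(x) - 1/x - 1/(2x²) > 0, where ψ' is the trigamma function (derivative of the digamma function). -/
open Real Filter Set Topology

noncomputable def digamma : ℝ → ℝ := deriv (fun y : ℝ => Real.log (Real.Gamma y))

lemma analyticOnNhd_logGamma :
    AnalyticOnNhd ℝ (fun y : ℝ => Real.log (Real.Gamma y)) (Set.Ioi 0) := by
  intro x hx
  rw [Set.mem_Ioi] at hx
  have h1 : AnalyticAt ℂ Complex.Gamma (x : ℂ) := by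
    have hop : IsOpen {s : ℂ | 0 < s.re} := isOpen_lt continuous_const Complex.continuous_re
    have hd : DifferentiableOn ℂ Complex.Gamma {s : ℂ | 0 < s.re} := by
      intro s hs
      refine (Complex.differentiableAt_Gamma s fun m => ?_).differentiableWithinAt
      intro h
      rw [Set.mem_setOf_eq, h] at hs
      simp only [Complex.neg_re, Complex.natCast_re] at hs
      have : (0 : ℝ) ≤ m := Nat.cast_nonneg m
      linarith
    exact hd.analyticAt (hop.mem_nhds (by simpa using hx))
  have h2 : AnalyticAt ℂ Complex.log (Complex.Gamma (x : ℂ)) := by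
    apply analyticAt_clog
    rw [Complex.Gamma_ofReal]
    exact Complex.mem_slitPlane_iff.2 (Or.inl (by simpa using Real.Gamma_pos_of_pos hx))
  have h3 : AnalyticAt ℂ (fun z => Complex.log (Complex.Gamma z)) (x : ℂ) := h2.comp h1
  have h5 : AnalyticAt ℝ (fun y : ℝ => Complex.log (Complex.Gamma (y : ℂ))) x :=
    h3.restrictScalars.comp (Complex.ofRealCLM.analyticAt x)
  have h6 : AnalyticAt ℝ (fun y : ℝ => (Complex.log (Complex.Gamma (y : ℂ))).re) x :=
    (Complex.reCLM.analyticAt _).comp h5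
  refine h6.congr ?_
  filter_upwards [eventually_gt_nhds hx] with y hy
  rw [Complex.Gamma_ofReal, ← Complex.ofReal_log (Real.Gamma_pos_of_pos hy).le,
    Complex.ofReal_re]

lemma analyticOnNhd_digamma : AnalyticOnNhd ℝ digamma (Set.Ioi 0) :=
  analyticOnNhd_logGamma.deriv

lemma analyticOnNhd_trigamma : AnalyticOnNhd ℝ (deriv digamma) (Set.Ioi 0) :=
  analyticOnNhd_digamma.deriv

lemma digamma_rec {x : ℝ} (hx : 0 < x) : digamma (x + 1) = digamma x + 1 / x := by
  unfold digamma
  rw [← deriv_comp_add_const, one_div, ← deriv_log, ← deriv_fun_add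
    ((analyticOnNhd_logGamma x hx).differentiableAt) (Real.differentiableAt_log hx.ne')]
  apply Filter.EventuallyEq.deriv_eq
  filter_upwards [eventually_gt_nhds hx] with y hy
  rw [Real.Gamma_add_one hy.ne', Real.log_mul hy.ne' (Real.Gamma_pos_of_pos hy).ne',
    add_comm]

lemma trigamma_rec {x : ℝ} (hx : 0 < x) :
    deriv digamma x = 1 / x ^ 2 + deriv digamma (x + 1) := by
  have h1 : deriv digamma (x + 1) = deriv (fun y => digamma (y + 1)) x :=
    (deriv_comp_add_const digamma 1 x).symm
  have h2 : (fun y => digamma (y + 1)) =ᶠ[nhds x] fun y => digamma y + 1 / y := by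
    filter_upwards [eventually_gt_nhds hx] with y hy
    exact digamma_rec hy
  have h3 : deriv (fun y => digamma y + 1 / y) x = deriv digamma x - 1 / x ^ 2 := by
    have hdig := ((analyticOnNhd_digamma x hx).differentiableAt).hasDerivAt
    have hinv : HasDerivAt (fun y : ℝ => 1 / y) (-(1 / x ^ 2)) x := by
      simpa [one_div] using hasDerivAt_inv hx.ne'
    have hd := hdig.fun_add hinv
    rw [hd.deriv]; ring
  rw [h1, h2.deriv_eq, h3]; ring

lemma trigamma_nonneg {x : ℝ} (hx : 0 < x) : 0 ≤ deriv digamma x := by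
  have hmono : MonotoneOn digamma (Set.Ioi 0) := by
    have := Real.convexOn_log_Gamma.monotoneOn_deriv
      (fun y hy => (analyticOnNhd_logGamma y hy).differentiableAt)
    simpa [digamma, Function.comp_def] using this
  have hd : HasDerivAt digamma (deriv digamma x) x :=
    ((analyticOnNhd_digamma x hx).differentiableAt).hasDerivAt
  rw [hasDerivAt_iff_tendsto_slope] at hd
  have hd' : Filter.Tendsto (slope digamma x) (nhdsWithin x (Set.Ioi x))
      (nhds (deriv digamma x)) :=
    hd.mono_left (nhdsWithin_mono x fun y hy => ne_of_gt hy)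
  refine ge_of_tendsto hd' ?_
  filter_upwards [self_mem_nhdsWithin] with y hy
  rw [Set.mem_Ioi] at hy
  have : digamma x ≤ digamma y := hmono hx (lt_trans hx hy) hy.le
  rw [slope_def_field]
  exact div_nonneg (by linarith) (by linarith)

lemma trigamma_partial {x : ℝ} (hx : 0 < x) (n : ℕ) :
    deriv digamma x =
      (Finset.range n).sum (fun k => 1 / (x + k) ^ 2) + deriv digamma (x + n) := by
  induction n with
  | zero => simp
  | succ n ih =>
    have hxn : 0 < x + n := by positivity
    rw [Finset.sum_range_succ, ih, trigamma_rec hxn]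
    push_cast
    rw [show (x + (↑n + 1) : ℝ) = x + ↑n + 1 by ring]
    ring

lemma tele_bound {x : ℝ} (hx : 0 < x) (n : ℕ) (hn : 1 ≤ n) :
    1 / x - 1 / (x + n) + 1 / (2 * x ^ 2) - 1 / (2 * (x + n) ^ 2)
        + 1 / (2 * x ^ 2 * (x + 1) ^ 2)
      ≤ (Finset.range n).sum (fun k => 1 / (x + k) ^ 2) := by
  induction n with
  | zero => omega
  | succ n ih =>
    rcases Nat.eq_or_lt_of_le hn with h1 | h1
    · have hn0 : n = 0 := by omega
      subst hn0
      have hx1 : (0:ℝ) < x + 1 := by linarith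
      have hkey : 1 / x - 1 / (x + 1) + 1 / (2 * x ^ 2) - 1 / (2 * (x + 1) ^ 2)
          + 1 / (2 * x ^ 2 * (x + 1) ^ 2) = 1 / x ^ 2 := by
        field_simp
        ring
      rw [Finset.sum_range_one]
      push_cast
      rw [add_zero, hkey]
    · have hn' : 1 ≤ n := by omega
      have hxn : (0:ℝ) < x + n := by positivity
      have hxn1 : (0:ℝ) < x + n + 1 := by linarith
      rw [Finset.sum_range_succ]
      push_cast
      rw [show (x + (↑n + 1) : ℝ) = x + ↑n + 1 by ring]
      have hid : 1 / (x + ↑n) ^ 2 -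
          (1 / (x + ↑n) - 1 / (x + ↑n + 1) + 1 / (2 * (x + ↑n) ^ 2)
            - 1 / (2 * (x + ↑n + 1) ^ 2))
          = 1 / (2 * (x + ↑n) ^ 2 * (x + ↑n + 1) ^ 2) := by
        field_simp
        ring
      have hp : (0:ℝ) < 1 / (2 * (x + ↑n) ^ 2 * (x + ↑n + 1) ^ 2) := by positivity
      have ih' := ih hn'
      linarith [ih', hid, hp]

theorem trigamma_sub_pos : ∀ x : ℝ, 0 < x →
    0 < deriv digamma x - 1 / x - 1 / (2 * x ^ 2) := by
  intro x hx
  set n : ℕ := ⌈4 * x ^ 2 * (x + 1) ^ 2⌉₊ + 1 with hn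
  have hn1 : 1 ≤ n := Nat.le_add_left 1 _
  have hncast : 4 * x ^ 2 * (x + 1) ^ 2 < (n : ℝ) := by
    have := Nat.le_ceil (4 * x ^ 2 * (x + 1) ^ 2)
    push_cast [hn]
    linarith
  have hxn : (0:ℝ) < x + n := by positivity
  have hxn1 : (1:ℝ) ≤ x + n := by
    have : (1:ℝ) ≤ (n:ℝ) := by exact_mod_cast hn1
    linarith
  have hS := tele_bound hx n hn1
  have hpart := trigamma_partial hx n
  have hnn := trigamma_nonneg hxn
  have hsum_le : (Finset.range n).sum (fun k => 1 / (x + k) ^ 2) ≤ deriv digamma x := by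
    rw [hpart]; linarith
  -- tail estimate
  have hxpos : (0:ℝ) < x := hx
  have heps : 1 / (x + n) + 1 / (2 * (x + n) ^ 2) < 1 / (2 * x ^ 2 * (x + 1) ^ 2) := by
    have h1 : 1 / (2 * (x + n) ^ 2) ≤ 1 / (2 * (x + n)) := by
      apply one_div_le_one_div_of_le (by linarith)
      nlinarith
    have h2 : 1 / (x + n) + 1 / (2 * (x + n)) ≤ 2 / (x + n) := by
      rw [div_add_div _ _ (by linarith : (x+n) ≠ 0) (by linarith : 2*(x+n) ≠ 0)]
      rw [div_le_div_iff₀ (by positivity) (by positivity)]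
      ring_nf
      nlinarith
    have h3 : 2 / (x + n) < 1 / (2 * x ^ 2 * (x + 1) ^ 2) := by
      rw [div_lt_div_iff₀ (by positivity) (by positivity)]
      nlinarith
    linarith
  linarith
end

section
/- For all x > 0, ψ''(x) + (ψ'(x))² > 0, where ψ', ψ'' are the first and second derivatives of the digamma function. -/
open Filter Topology Set Finset

namespace DG

noncomputable def T (x : ℝ) : ℝ := ∑' k : ℕ, 1 / (x + k) ^ 2
noncomputable def U (x : ℝ) : ℝ := ∑' k : ℕ, 1 / (x + k) ^ 3

lemma summable_aux {a : ℝ} (ha : 0 < a) {p : ℕ} (hp : 1 < p) :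
    Summable (fun k : ℕ => 1 / (a + k) ^ p) := by
  have hbase : Summable (fun k : ℕ => 1 / ((k : ℝ) + 1) ^ p) := by
    have := (Real.summable_one_div_nat_pow (p := p)).2 hp
    have := (summable_nat_add_iff (f := fun n : ℕ => 1 / (n : ℝ) ^ p) 1).2 this
    simpa using this
  set m := min a 1 with hm
  have hm0 : 0 < m := lt_min ha one_pos
  refine Summable.of_nonneg_of_le (fun k => by positivity)
      (fun k => ?_) (hbase.mul_left (1 / m ^ p))
  have hk : m * ((k : ℝ) + 1) ≤ a + k := by
    have h1 : m ≤ a := min_le_left _ _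
    have h2 : m ≤ 1 := min_le_right _ _
    nlinarith [Nat.cast_nonneg (α := ℝ) k]
  have h0 : (0:ℝ) < m * ((k : ℝ) + 1) := by positivity
  have : 1 / (a + k) ^ p ≤ 1 / (m * ((k : ℝ) + 1)) ^ p := by
    apply one_div_le_one_div_of_le (by positivity)
    exact pow_le_pow_left₀ h0.le hk p
  refine this.trans (le_of_eq ?_)
  rw [mul_pow]
  field_simp

lemma sumT {z : ℝ} (hz : 0 < z) : Summable (fun k : ℕ => 1 / (z + k) ^ 2) :=
  summable_aux hz one_lt_two

lemma sumU {z : ℝ} (hz : 0 < z) : Summable (fun k : ℕ => 1 / (z + k) ^ 3) :=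
  summable_aux hz (by norm_num)

lemma hasSum_telescope {b : ℕ → ℝ} (hb : Tendsto b atTop (𝓝 0))
    (hmono : ∀ k, b (k + 1) ≤ b k) : HasSum (fun k => b k - b (k + 1)) (b 0) := by
  have hsum : Summable (fun k => b k - b (k + 1)) := by
    apply summable_of_sum_range_le (c := b 0) (fun k => sub_nonneg.2 (hmono k))
    intro n
    rw [Finset.sum_range_sub' b n]
    have hanti : Antitone b := antitone_nat_of_succ_le hmono
    have h0 : 0 ≤ b n := le_of_tendsto hb (eventually_atTop.2 ⟨n, fun m hm => hanti hm⟩)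
    linarith
  have h1 := hsum.hasSum.tendsto_sum_nat
  have h2 : Tendsto (fun n => ∑ i ∈ Finset.range n, (b i - b (i + 1))) atTop (𝓝 (b 0)) := by
    have : (fun n => ∑ i ∈ Finset.range n, (b i - b (i + 1))) = fun n => b 0 - b n := by
      funext n; exact Finset.sum_range_sub' b n
    rw [this]
    simpa using tendsto_const_nhds.sub hb
  have := tendsto_nhds_unique h1 h2
  rw [← this]
  exact hsum.hasSum


lemma T_nonneg {z : ℝ} : 0 ≤ T z := tsum_nonneg (fun k => by positivity)

lemma U_nonneg {z : ℝ} (hz : 0 < z) : 0 ≤ U z := tsum_nonneg (fun k => by positivity)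

lemma T_rec {z : ℝ} (hz : 0 < z) : T z = 1 / z ^ 2 + T (z + 1) := by
  rw [T, Summable.tsum_eq_zero_add (sumT hz)]
  congr 1
  · norm_num
  · rw [T]
    apply tsum_congr
    intro k
    push_cast
    ring_nf

lemma U_rec {z : ℝ} (hz : 0 < z) : U z = 1 / z ^ 3 + U (z + 1) := by
  rw [U, Summable.tsum_eq_zero_add (sumU hz)]
  congr 1
  · norm_num
  · rw [U]
    apply tsum_congr
    intro k
    push_cast
    ring_nf

lemma tendsto_b0 {z : ℝ} (hz : 0 < z) :
    Tendsto (fun k : ℕ => 1 / (z + k)) atTop (𝓝 0) := by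
  have h1 : Tendsto (fun k : ℕ => z + (k : ℝ)) atTop atTop :=
    tendsto_atTop_add_const_left _ z tendsto_natCast_atTop_atTop
  have h2 : Tendsto (fun k : ℕ => (z + (k:ℝ))⁻¹) atTop (𝓝 0) := h1.inv_tendsto_atTop
  simpa [one_div] using h2

lemma T_ge {z : ℝ} (hz : 0 < z) : 1 / z + 1 / (2 * z ^ 2) ≤ T z := by
  set b : ℕ → ℝ := fun k => 1 / (z + k) + 1 / (2 * (z + k) ^ 2) with hb
  have hpos : ∀ k : ℕ, (0:ℝ) < z + k := fun k => by positivity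
  have hbsucc : ∀ k : ℕ, b (k + 1) = 1 / (z + k + 1) + 1 / (2 * (z + k + 1) ^ 2) := by
    intro k; simp only [hb]; push_cast; ring_nf
  have hbm : ∀ k, b (k + 1) ≤ b k := by
    intro k
    have ht := hpos k
    have i1 : 1 / (z + (k:ℝ) + 1) ≤ 1 / (z + k) := one_div_le_one_div_of_le ht (by linarith)
    have i2 : 1 / (2 * (z + (k:ℝ) + 1) ^ 2) ≤ 1 / (2 * (z + k) ^ 2) :=
      one_div_le_one_div_of_le (by positivity) (by nlinarith)
    rw [hbsucc k]; simp only [hb]; linarith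
  have hb0 : Tendsto b atTop (𝓝 0) := by
    have h1 := tendsto_b0 hz
    have h2 : Tendsto (fun k : ℕ => 1 / (2 * (z + k) ^ 2)) atTop (𝓝 0) := by
      have h2' : (fun k : ℕ => 1 / (2 * (z + k) ^ 2))
          = fun k : ℕ => (1/2) * ((1 / (z + k)) * (1 / (z + k))) := by
        funext k
        have := hpos k
        field_simp
      rw [h2']
      simpa [one_div] using ((tendsto_b0 hz).mul (tendsto_b0 hz)).const_mul ((2:ℝ)⁻¹)
    rw [hb, show (0:ℝ) = 0 + 0 by norm_num]
    exact h1.add h2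
  have hts := hasSum_telescope hb0 hbm
  have hterm : ∀ k : ℕ, b k - b (k + 1) ≤ 1 / (z + k) ^ 2 := by
    intro k
    have ht := hpos k
    have key : 1 / (z + (k:ℝ)) ^ 2 - (b k - b (k + 1)) = 1 / (2 * (z+k)^2 * (z+k+1)^2) := by
      rw [hbsucc k]; simp only [hb]
      field_simp
      ring
    have hge : (0:ℝ) < 1 / (2 * (z+(k:ℝ))^2 * (z+k+1)^2) := by positivity
    linarith
  have := Summable.tsum_le_tsum hterm hts.summable (sumT hz)
  rw [hts.tsum_eq] at this
  have hb00 : b 0 = 1 / z + 1 / (2 * z ^ 2) := by simp [hb]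
  rw [T, ← hb00]
  exact this

lemma T_le {z : ℝ} (hz : 1 < z) : T z ≤ 1 / (z - 1) := by
  have hz0 : 0 < z := lt_trans one_pos hz
  set b : ℕ → ℝ := fun k => 1 / (z - 1 + k) with hb
  have hpos : ∀ k : ℕ, (0:ℝ) < z - 1 + k := fun k => by
    have := Nat.cast_nonneg (α := ℝ) k; linarith
  have hbsucc : ∀ k : ℕ, b (k + 1) = 1 / (z + k) := by
    intro k; simp only [hb]; push_cast; ring_nf
  have hbm : ∀ k, b (k + 1) ≤ b k := by
    intro k
    rw [hbsucc k]; simp only [hb]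
    exact one_div_le_one_div_of_le (hpos k) (by linarith)
  have hb0 : Tendsto b atTop (𝓝 0) := tendsto_b0 (by linarith)
  have hts := hasSum_telescope hb0 hbm
  have hterm : ∀ k : ℕ, 1 / (z + k) ^ 2 ≤ b k - b (k + 1) := by
    intro k
    have h1 := hpos k
    have h2 : (0:ℝ) < z + k := by linarith
    have key : (b k - b (k + 1)) - 1 / (z + (k:ℝ)) ^ 2 = 1 / ((z - 1 + k) * (z + k) ^ 2) := by
      rw [hbsucc k]; simp only [hb]
      field_simp
      ring
    have hge : (0:ℝ) < 1 / ((z - 1 + (k:ℝ)) * (z + k) ^ 2) := by positivity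
    linarith
  have := Summable.tsum_le_tsum hterm (sumT hz0) hts.summable
  rw [hts.tsum_eq] at this
  have hb00 : b 0 = 1 / (z - 1) := by simp [hb]
  rw [T, ← hb00]
  exact this

lemma U_le_T {z : ℝ} (hz : 1 ≤ z) : U z ≤ T z := by
  have hz0 : 0 < z := lt_of_lt_of_le one_pos hz
  apply Summable.tsum_le_tsum _ (sumU hz0) (sumT hz0)
  intro k
  have h1 : (0:ℝ) < z + k := by positivity
  have h2 : (1:ℝ) ≤ z + k := by have := Nat.cast_nonneg (α := ℝ) k; linarith
  rw [pow_succ]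
  rw [div_le_div_iff₀ (by positivity) (by positivity)]
  nlinarith


lemma h_step {z : ℝ} (hz : 0 < z) :
    T (z + 1) ^ 2 - 2 * U (z + 1) < T z ^ 2 - 2 * U z := by
  have hz1 : (0:ℝ) < z + 1 := by linarith
  have e1 : T z = 1 / z ^ 2 + T (z + 1) := T_rec hz
  have e2 : U z = 1 / z ^ 3 + U (z + 1) := U_rec hz
  have hT1 : 1 / (z + 1) + 1 / (2 * (z + 1) ^ 2) ≤ T (z + 1) := T_ge hz1
  have key : T z ^ 2 - 2 * U z - (T (z + 1) ^ 2 - 2 * U (z + 1))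
      = 2 * T (z + 1) / z ^ 2 + 1 / z ^ 4 - 2 / z ^ 3 := by
    rw [e1, e2]; ring
  have lower : 2 * (1 / (z + 1) + 1 / (2 * (z + 1) ^ 2)) / z ^ 2 + 1 / z ^ 4 - 2 / z ^ 3
      = 1 / (z ^ 4 * (z + 1) ^ 2) := by
    field_simp
    ring
  have h4 : 2 * (1 / (z + 1) + 1 / (2 * (z + 1) ^ 2)) / z ^ 2 ≤ 2 * T (z + 1) / z ^ 2 := by
    gcongr
  have hpos : (0:ℝ) < 1 / (z ^ 4 * (z + 1) ^ 2) := by positivity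
  nlinarith [key, lower, h4, hpos]

lemma key_ineq {x : ℝ} (hx : 0 < x) : 2 * U x < T x ^ 2 := by
  have hx1 : (0:ℝ) < x + 1 := by linarith
  have hdec : ∀ n : ℕ, T (x + 1 + n) ^ 2 - 2 * U (x + 1 + n) ≤ T (x + 1) ^ 2 - 2 * U (x + 1) := by
    intro n
    induction n with
    | zero => simp
    | succ k ih =>
        have hzk : (0:ℝ) < x + 1 + k := by positivity
        have hcast : x + 1 + ((k:ℕ) + 1 : ℕ) = (x + 1 + (k:ℕ)) + 1 := by push_cast; ring
        rw [hcast]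
        exact le_trans (h_step hzk).le ih
  have hTlim : Tendsto (fun n : ℕ => T (x + 1 + n)) atTop (𝓝 0) := by
    apply squeeze_zero (fun n => T_nonneg)
      (g := fun n : ℕ => 1 / (x + n))
    · intro n
      have h1 : (1:ℝ) < x + 1 + n := by have := Nat.cast_nonneg (α := ℝ) n; linarith
      have := T_le h1
      rw [show x + 1 + (n:ℝ) - 1 = x + n by ring] at this
      exact this
    · exact tendsto_b0 hx
  have hUlim : Tendsto (fun n : ℕ => U (x + 1 + n)) atTop (𝓝 0) := by
    apply squeeze_zero (fun n => U_nonneg (by positivity)) (fun n => U_le_T (by have := Nat.cast_nonneg (α := ℝ) n; linarith)) hTlim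
  have hlim : Tendsto (fun n : ℕ => T (x + 1 + n) ^ 2 - 2 * U (x + 1 + n)) atTop (𝓝 0) := by
    have h := (hTlim.mul hTlim).sub (hUlim.const_mul 2)
    have h0 : (0:ℝ) = 0 * 0 - 2 * 0 := by norm_num
    rw [h0]
    exact Tendsto.congr (fun n => by ring) h
  have hge : (0:ℝ) ≤ T (x + 1) ^ 2 - 2 * U (x + 1) :=
    le_of_tendsto hlim (Eventually.of_forall hdec)
  have := h_step hx
  linarith


noncomputable def G1 (x : ℝ) : ℝ :=
  -Real.eulerMascheroniConstant + ∑' k : ℕ, (1 / ((k:ℝ) + 1) - 1 / (x + k))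

noncomputable def G3 (x : ℝ) : ℝ := ∑' k : ℕ, -2 / (x + k) ^ 3

lemma G3_eq {x : ℝ} : G3 x = -2 * U x := by
  rw [G3, U, ← tsum_mul_left]
  apply tsum_congr
  intro k
  rw [mul_one_div]

lemma sumBase : Summable (fun k : ℕ => 1 / ((k:ℝ) + 1) ^ 2) := by
  have h := (Real.summable_one_div_nat_pow (p := 2)).2 one_lt_two
  have := (summable_nat_add_iff (f := fun n : ℕ => 1 / (n : ℝ) ^ 2) 1).2 h
  simpa using this

lemma sumG1 {x : ℝ} (hx : 0 < x) :
    Summable (fun k : ℕ => 1 / ((k:ℝ) + 1) - 1 / (x + k)) := by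
  set m := min x 1 with hm
  have hm0 : 0 < m := lt_min hx one_pos
  apply Summable.of_norm
  refine Summable.of_nonneg_of_le (fun k => norm_nonneg _) (fun k => ?_)
      (sumBase.mul_left ((|x - 1| / m)))
  have hk0 : (0:ℝ) < (k:ℝ) + 1 := by positivity
  have hxk : (0:ℝ) < x + k := by positivity
  have hmk : m * ((k:ℝ) + 1) ≤ x + k := by
    have h1 : m ≤ x := min_le_left _ _
    have h2 : m ≤ 1 := min_le_right _ _
    nlinarith [Nat.cast_nonneg (α := ℝ) k]
  have hid : 1 / ((k:ℝ) + 1) - 1 / (x + k) = (x - 1) / (((k:ℝ) + 1) * (x + k)) := by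
    field_simp
    ring
  rw [Real.norm_eq_abs, hid, abs_div, abs_of_pos (mul_pos hk0 hxk)]
  have hden : m * ((k:ℝ) + 1) ^ 2 ≤ ((k:ℝ) + 1) * (x + k) := by
    nlinarith
  have := div_le_div₀ (c := |x - 1|) (abs_nonneg _) le_rfl (by positivity) hden
  refine this.trans (le_of_eq ?_)
  rw [pow_two]
  field_simp
  try ring

noncomputable def F0 (n : ℕ) (x : ℝ) : ℝ :=
  x * Real.log n + Real.log (Nat.factorial n) - ∑ k ∈ Finset.range (n + 1), Real.log (x + k)

noncomputable def F1 (n : ℕ) (x : ℝ) : ℝ :=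
  Real.log n - ∑ k ∈ Finset.range (n + 1), 1 / (x + k)

noncomputable def F2 (n : ℕ) (x : ℝ) : ℝ := ∑ k ∈ Finset.range (n + 1), 1 / (x + k) ^ 2

noncomputable def F3 (n : ℕ) (x : ℝ) : ℝ := ∑ k ∈ Finset.range (n + 1), -2 / (x + k) ^ 3

lemma hasDerivAt_F0 (n : ℕ) {x : ℝ} (hx : 0 < x) : HasDerivAt (F0 n) (F1 n x) x := by
  have hsum : HasDerivAt (fun y : ℝ => ∑ k ∈ Finset.range (n + 1), Real.log (y + k))
      (∑ k ∈ Finset.range (n + 1), 1 / (x + k)) x := by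
    apply HasDerivAt.fun_sum
    intro k _
    have h1 : HasDerivAt (fun y : ℝ => y + (k:ℝ)) 1 x := (hasDerivAt_id x).add_const _
    simpa using h1.log (by positivity)
  have h3 : HasDerivAt (fun y : ℝ => y * Real.log n + Real.log (Nat.factorial n)) (Real.log n) x :=
    (hasDerivAt_mul_const _).add_const _
  exact h3.fun_sub hsum

lemma hasDerivAt_F1 (n : ℕ) {x : ℝ} (hx : 0 < x) : HasDerivAt (F1 n) (F2 n x) x := by
  have hsum : HasDerivAt (fun y : ℝ => ∑ k ∈ Finset.range (n + 1), 1 / (y + k))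
      (∑ k ∈ Finset.range (n + 1), -(1 / (x + k) ^ 2)) x := by
    apply HasDerivAt.fun_sum
    intro k _
    have h1 : HasDerivAt (fun y : ℝ => y + (k:ℝ)) 1 x := (hasDerivAt_id x).add_const _
    have h2 := h1.fun_inv (by positivity)
    simpa [one_div, neg_div] using h2
  have h3 := (hasDerivAt_const x (Real.log n)).fun_sub hsum
  have h4 : HasDerivAt (F1 n) (0 - ∑ k ∈ Finset.range (n + 1), -(1 / (x + k) ^ 2)) x := by
    have he : F1 n = fun y : ℝ => Real.log n - ∑ k ∈ Finset.range (n + 1), 1 / (y + k) := rfl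
    rw [he]
    simpa [one_div] using h3
  simpa [F2, Finset.sum_neg_distrib, one_div] using h4

lemma hasDerivAt_F2 (n : ℕ) {x : ℝ} (hx : 0 < x) : HasDerivAt (F2 n) (F3 n x) x := by
  show HasDerivAt (fun y : ℝ => ∑ k ∈ Finset.range (n + 1), 1 / (y + k) ^ 2)
    (∑ k ∈ Finset.range (n + 1), -2 / (x + k) ^ 3) x
  apply HasDerivAt.fun_sum
  intro k _
  have hxk : (0:ℝ) < x + k := by positivity
  have h1 : HasDerivAt (fun y : ℝ => y + (k:ℝ)) 1 x := (hasDerivAt_id x).add_const _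
  have h2 := (h1.fun_pow 2).fun_inv (by positivity)
  have h2' : HasDerivAt (fun y : ℝ => ((y + (k:ℝ)) ^ 2)⁻¹) (-2 / (x + k) ^ 3) x := by
    refine h2.congr_deriv ?_
    push_cast
    field_simp
  simpa [one_div] using h2'

lemma shiftTU {f : ℕ → ℝ → ℝ} {g : ℝ → ℝ} {s : Set ℝ} (h : TendstoUniformlyOn f g atTop s) :
    TendstoUniformlyOn (fun n => f (n + 1)) g atTop s :=
  fun u hu => (tendsto_add_atTop_nat 1).eventually (h u hu)

lemma TU2 {a b : ℝ} (ha : 0 < a) : TendstoUniformlyOn F2 T atTop (Ioo a b) := by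
  have hfu : ∀ (k : ℕ) (x : ℝ), x ∈ Ioo a b → ‖1 / (x + (k:ℝ)) ^ 2‖ ≤ 1 / (a + k) ^ 2 := by
    intro k x hx
    have h1 : (0:ℝ) < a + k := by positivity
    have h2 : a + (k:ℝ) ≤ x + k := by have := hx.1; linarith
    have h3 : (0:ℝ) < x + k := lt_of_lt_of_le h1 h2
    rw [Real.norm_eq_abs, abs_of_pos (show (0:ℝ) < 1 / (x + (k:ℝ)) ^ 2 by positivity)]
    apply one_div_le_one_div_of_le (by positivity)
    exact pow_le_pow_left₀ h1.le h2 2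
  exact shiftTU (tendstoUniformlyOn_tsum_nat (f := fun (k : ℕ) (x : ℝ) => 1 / (x + k) ^ 2)
    (sumT ha) hfu)

lemma TU3 {a b : ℝ} (ha : 0 < a) : TendstoUniformlyOn F3 G3 atTop (Ioo a b) := by
  have hu : Summable (fun k : ℕ => 2 / (a + k) ^ 3) := by
    simpa [div_eq_mul_inv] using (sumU ha).mul_left 2
  have hfu : ∀ (k : ℕ) (x : ℝ), x ∈ Ioo a b → ‖-2 / (x + (k:ℝ)) ^ 3‖ ≤ 2 / (a + k) ^ 3 := by
    intro k x hx
    have h1 : (0:ℝ) < a + k := by positivity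
    have h2 : a + (k:ℝ) ≤ x + k := by have := hx.1; linarith
    have h3 : (0:ℝ) < x + k := lt_of_lt_of_le h1 h2
    rw [Real.norm_eq_abs, abs_div, abs_of_pos (show (0:ℝ) < (x + (k:ℝ)) ^ 3 by positivity)]
    rw [show |(-2 : ℝ)| = 2 by norm_num]
    apply div_le_div₀ (by norm_num) le_rfl (by positivity)
    exact pow_le_pow_left₀ h1.le h2 3
  exact shiftTU (tendstoUniformlyOn_tsum_nat (f := fun (k : ℕ) (x : ℝ) => -2 / (x + k) ^ 3)
    hu hfu)

noncomputable def cst (n : ℕ) : ℝ :=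
  Real.log n - ∑ k ∈ Finset.range (n + 1), 1 / ((k:ℝ) + 1)

lemma harmonic_cast (n : ℕ) : ((harmonic n : ℚ) : ℝ) = ∑ k ∈ Finset.range n, 1 / ((k:ℝ) + 1) := by
  rw [harmonic]
  push_cast
  simp [one_div]

lemma tendsto_cst : Tendsto cst atTop (𝓝 (-Real.eulerMascheroniConstant)) := by
  have h1 : Tendsto (fun n : ℕ => ((harmonic (n + 1) : ℚ) : ℝ) - Real.log ((n:ℝ) + 1)) atTop
      (𝓝 Real.eulerMascheroniConstant) := by
    have := Real.tendsto_harmonic_sub_log.comp (tendsto_add_atTop_nat 1)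
    apply this.congr
    intro n
    simp only [Function.comp_apply]
    push_cast
    ring
  have h2 : Tendsto (fun n : ℕ => Real.log n - Real.log ((n:ℝ) + 1)) atTop (𝓝 0) := by
    have h := Real.tendsto_harmonic_sub_log_add_one.sub Real.tendsto_harmonic_sub_log
    rw [sub_self] at h
    exact h.congr (fun n => by ring)
  have h3 := h1.neg.add h2
  rw [add_zero] at h3
  apply h3.congr
  intro n
  rw [cst, harmonic_cast]
  ring

lemma TU1 {a b : ℝ} (ha : 0 < a) (hb : 0 < b) : TendstoUniformlyOn F1 G1 atTop (Ioo a b) := by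
  set m := min a 1 with hm
  have hm0 : 0 < m := lt_min ha one_pos
  have TUc : TendstoUniformlyOn (fun (n : ℕ) (_ : ℝ) => cst n)
      (fun _ => -Real.eulerMascheroniConstant) atTop (Ioo a b) := by
    rw [Metric.tendstoUniformlyOn_iff]
    intro ε hε
    filter_upwards [Metric.tendsto_nhds.mp tendsto_cst ε hε] with n hn x _
    rw [dist_comm]
    exact hn
  have TUP : TendstoUniformlyOn
      (fun (n : ℕ) (x : ℝ) => ∑ k ∈ Finset.range (n + 1), (1 / ((k:ℝ) + 1) - 1 / (x + k)))
      (fun x => ∑' k : ℕ, (1 / ((k:ℝ) + 1) - 1 / (x + k))) atTop (Ioo a b) := by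
    have hu : Summable (fun k : ℕ => ((b + 1) / m) * (1 / ((k:ℝ) + 1) ^ 2)) :=
      sumBase.mul_left _
    have hfu : ∀ (k : ℕ) (x : ℝ), x ∈ Ioo a b →
        ‖1 / ((k:ℝ) + 1) - 1 / (x + k)‖ ≤ ((b + 1) / m) * (1 / ((k:ℝ) + 1) ^ 2) := by
      intro k x hx
      have hx0 : 0 < x := lt_trans ha hx.1
      have hk0 : (0:ℝ) < (k:ℝ) + 1 := by positivity
      have hxk : (0:ℝ) < x + k := by positivity
      have hid : 1 / ((k:ℝ) + 1) - 1 / (x + k) = (x - 1) / (((k:ℝ) + 1) * (x + k)) := by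
        field_simp
        ring
      have hmk : m * ((k:ℝ) + 1) ≤ x + k := by
        have h1 : m ≤ a := min_le_left _ _
        have h2 : m ≤ 1 := min_le_right _ _
        have h3 : a ≤ x := hx.1.le
        nlinarith [Nat.cast_nonneg (α := ℝ) k]
      have habs : |x - 1| ≤ b + 1 := by
        rw [abs_le]
        constructor <;> [linarith [hx0]; linarith [hx.2]]
      rw [Real.norm_eq_abs, hid, abs_div, abs_of_pos (mul_pos hk0 hxk)]
      have hden : m * ((k:ℝ) + 1) ^ 2 ≤ ((k:ℝ) + 1) * (x + k) := by nlinarith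
      have := div_le_div₀ (c := b + 1) (by linarith) habs (by positivity) hden
      refine this.trans (le_of_eq ?_)
      rw [pow_two]
      field_simp
      try ring
    exact shiftTU (tendstoUniformlyOn_tsum_nat
      (f := fun (k : ℕ) (x : ℝ) => 1 / ((k:ℝ) + 1) - 1 / (x + k)) hu hfu)
  have hlimeq : ((fun _ : ℝ => -Real.eulerMascheroniConstant)
      + fun x => ∑' k : ℕ, (1 / ((k:ℝ) + 1) - 1 / (x + k))) = G1 := by
    funext x
    simp [G1, Pi.add_apply]
  have := TUc.add TUP
  rw [hlimeq] at this
  apply this.congr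
  apply Eventually.of_forall
  intro n x hx
  simp only [Pi.add_apply, F1, cst, Finset.sum_sub_distrib]
  ring

lemma tendsto_F0 {y : ℝ} (hy : 0 < y) :
    Tendsto (fun n => F0 n y) atTop (𝓝 (Real.log (Real.Gamma y))) := by
  have h0 := Real.GammaSeq_tendsto_Gamma y
  have hG : 0 < Real.Gamma y := Real.Gamma_pos_of_pos hy
  have h1 : Tendsto (fun n => Real.log (Real.GammaSeq y n)) atTop
      (𝓝 (Real.log (Real.Gamma y))) := ((Real.continuousAt_log hG.ne').tendsto).comp h0
  apply h1.congr'
  filter_upwards [eventually_ge_atTop 1] with n hn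
  have hn0 : (0:ℝ) < n := by exact_mod_cast hn
  have hprod : ∀ j ∈ Finset.range (n + 1), y + (j:ℝ) ≠ 0 := fun j _ =>
    (add_pos_of_pos_of_nonneg hy (Nat.cast_nonneg j)).ne'
  have hfac : ((Nat.factorial n : ℕ) : ℝ) ≠ 0 := by positivity
  simp only [Real.GammaSeq, F0]
  rw [Real.log_div (mul_ne_zero (Real.rpow_pos_of_pos hn0 y).ne' hfac)
      (Finset.prod_ne_zero_iff.2 hprod), Real.log_mul (Real.rpow_pos_of_pos hn0 y).ne' hfac,
    Real.log_rpow hn0, Real.log_prod hprod]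

lemma tendsto_F1 {y : ℝ} (hy : 0 < y) : Tendsto (fun n => F1 n y) atTop (𝓝 (G1 y)) := by
  have hP : Tendsto (fun n : ℕ => ∑ k ∈ Finset.range (n + 1), (1 / ((k:ℝ) + 1) - 1 / (y + k)))
      atTop (𝓝 (∑' k : ℕ, (1 / ((k:ℝ) + 1) - 1 / (y + k)))) :=
    (sumG1 hy).hasSum.tendsto_sum_nat.comp (tendsto_add_atTop_nat 1)
  have := tendsto_cst.add hP
  rw [show -Real.eulerMascheroniConstant + (∑' k : ℕ, (1 / ((k:ℝ) + 1) - 1 / (y + k))) = G1 y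
    from rfl] at this
  apply this.congr
  intro n
  simp only [F1, cst, Finset.sum_sub_distrib]
  ring

lemma tendsto_F2 {y : ℝ} (hy : 0 < y) : Tendsto (fun n => F2 n y) atTop (𝓝 (T y)) := by
  have := (sumT hy).hasSum.tendsto_sum_nat.comp (tendsto_add_atTop_nat 1)
  exact this.congr (fun n => rfl)

lemma mem_S {x : ℝ} (hx : 0 < x) : x ∈ Ioo (x / 2) (x + 1) := ⟨by linarith, by linarith⟩

lemma hasDerivAt_logGamma {x : ℝ} (hx : 0 < x) :
    HasDerivAt (fun y : ℝ => Real.log (Real.Gamma y)) (G1 x) x := by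
  apply hasDerivAt_of_tendstoUniformlyOn isOpen_Ioo (TU1 (half_pos hx) (by linarith))
      (Eventually.of_forall fun n y hy => hasDerivAt_F0 n (lt_trans (half_pos hx) hy.1))
      (fun y hy => tendsto_F0 (lt_trans (half_pos hx) hy.1)) (mem_S hx)

lemma hasDerivAt_G1 {x : ℝ} (hx : 0 < x) : HasDerivAt G1 (T x) x := by
  apply hasDerivAt_of_tendstoUniformlyOn isOpen_Ioo (TU2 (half_pos hx))
      (Eventually.of_forall fun n y hy => hasDerivAt_F1 n (lt_trans (half_pos hx) hy.1))
      (fun y hy => tendsto_F1 (lt_trans (half_pos hx) hy.1)) (mem_S hx)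

lemma hasDerivAt_T {x : ℝ} (hx : 0 < x) : HasDerivAt T (-2 * U x) x := by
  rw [← G3_eq]
  apply hasDerivAt_of_tendstoUniformlyOn isOpen_Ioo (TU3 (half_pos hx))
      (Eventually.of_forall fun n y hy => hasDerivAt_F2 n (lt_trans (half_pos hx) hy.1))
      (fun y hy => tendsto_F2 (lt_trans (half_pos hx) hy.1)) (mem_S hx)


lemma digamma_eq {x : ℝ} (hx : 0 < x) : digamma x = G1 x := (hasDerivAt_logGamma hx).deriv

lemma deriv_digamma {x : ℝ} (hx : 0 < x) : deriv digamma x = T x := by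
  have hev : digamma =ᶠ[𝓝 x] G1 :=
    Filter.eventuallyEq_of_mem (isOpen_Ioi.mem_nhds hx) (fun y hy => digamma_eq hy)
  rw [hev.deriv_eq, (hasDerivAt_G1 hx).deriv]

lemma iter2 {x : ℝ} (hx : 0 < x) : iteratedDeriv 2 digamma x = -2 * U x := by
  rw [show (2:ℕ) = 1 + 1 from rfl, iteratedDeriv_succ, iteratedDeriv_one]
  have hev : deriv digamma =ᶠ[𝓝 x] T :=
    Filter.eventuallyEq_of_mem (isOpen_Ioi.mem_nhds hx) (fun y hy => deriv_digamma hy)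
  rw [hev.deriv_eq, (hasDerivAt_T hx).deriv]

end DG

theorem g_pos : ∀ x : ℝ, 0 < x →
    0 < iteratedDeriv 2 digamma x + (deriv digamma x) ^ 2 := by
  intro x hx
  rw [DG.iter2 hx, DG.deriv_digamma hx]
  have := DG.key_ineq hx
  linarith
end

section
/- For all real x, 1/log(1 + e^{-x}) < ψ^{-1}(x) < e^x + 1/2, where ψ^{-1} is the inverse of the digamma function restricted to (0,∞). -/
open Real Set Filter Topology

lemma diffAtLG {t : ℝ} (ht : 0 < t) :
    DifferentiableAt ℝ (fun y : ℝ => Real.log (Real.Gamma y)) t :=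
  (Real.differentiableAt_Gamma fun m =>
    (((neg_nonpos.mpr m.cast_nonneg).trans_lt ht).ne')).log (Real.Gamma_pos_of_pos ht).ne'

lemma digamma_add_one {t : ℝ} (ht : 0 < t) : digamma (t + 1) = digamma t + 1 / t := by
  unfold digamma
  rw [← deriv_comp_add_const, one_div, ← Real.deriv_log, ← deriv_add (diffAtLG ht)
    (Real.differentiableAt_log ht.ne')]
  apply Filter.EventuallyEq.deriv_eq
  filter_upwards [eventually_gt_nhds ht] with y hy
  rw [Real.Gamma_add_one hy.ne', Real.log_mul hy.ne' (Real.Gamma_pos_of_pos hy).ne', add_comm]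
  rfl

lemma digamma_le_log {t : ℝ} (ht : 0 < t) : digamma t ≤ Real.log t := by
  have key : slope (fun y : ℝ => Real.log (Real.Gamma y)) t (t + 1) = Real.log t := by
    rw [slope_def_field, Real.Gamma_add_one ht.ne',
      Real.log_mul ht.ne' (Real.Gamma_pos_of_pos ht).ne']
    field_simp
    ring
  have h := Real.convexOn_log_Gamma.deriv_le_slope (mem_Ioi.mpr ht)
    (mem_Ioi.mpr (by linarith : (0:ℝ) < t + 1)) (by linarith) (f := Real.log ∘ Real.Gamma) ?_
  · simp only [Function.comp_def] at h
    rw [key] at h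
    exact h
  · exact diffAtLG ht

lemma log_le_digamma_add_one {t : ℝ} (ht : 0 < t) : Real.log t ≤ digamma (t + 1) := by
  have key : slope (fun y : ℝ => Real.log (Real.Gamma y)) t (t + 1) = Real.log t := by
    rw [slope_def_field, Real.Gamma_add_one ht.ne',
      Real.log_mul ht.ne' (Real.Gamma_pos_of_pos ht).ne']
    field_simp
    ring
  have h := Real.convexOn_log_Gamma.slope_le_deriv (mem_Ioi.mpr ht)
    (mem_Ioi.mpr (by linarith : (0:ℝ) < t + 1)) (by linarith) (f := Real.log ∘ Real.Gamma) ?_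
  · simp only [Function.comp_def] at h
    rw [key] at h
    exact h
  · exact diffAtLG (by linarith)

lemma log_sub_le_digamma {t : ℝ} (ht : 0 < t) : Real.log t - 1 / t ≤ digamma t := by
  have := log_le_digamma_add_one ht
  rw [digamma_add_one ht] at this
  linarith

lemma nonneg_of_deriv (f f' : ℝ → ℝ) (hd : ∀ x, HasDerivAt f (f' x) x)
    (h0 : f 0 = 0) (h' : ∀ x, 0 ≤ x → 0 ≤ f' x) : ∀ x, 0 ≤ x → 0 ≤ f x := by
  intro x hx
  have hmono : MonotoneOn f (Ici 0) := by
    apply monotoneOn_of_deriv_nonneg (convex_Ici 0)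
      (fun y _ => (hd y).differentiableAt.continuousAt.continuousWithinAt)
      (fun y _ => (hd y).differentiableAt.differentiableWithinAt)
    intro y hy
    rw [interior_Ici] at hy
    rw [(hd y).deriv]
    exact h' y (le_of_lt hy)
  have := hmono self_mem_Ici (mem_Ici.mpr hx) hx
  rwa [h0] at this

lemma hexpneg (x : ℝ) : HasDerivAt (fun y : ℝ => Real.exp (-y)) (-Real.exp (-x)) x := by
  simpa using ((hasDerivAt_id x).neg).exp

lemma exp_neg_taylor {a : ℝ} (ha : 0 ≤ a) :
    1 - a + a^2/2 - a^3/6 + a^4/24 - a^5/120 + a^6/720 - a^7/5040 ≤ Real.exp (-a) := by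
  have h1 : ∀ x : ℝ, 0 ≤ x → 0 ≤ Real.exp (-x) - (1 - x) := by
    intro x hx
    have := Real.add_one_le_exp (-x)
    linarith
  have h2 : ∀ x : ℝ, 0 ≤ x → 0 ≤ (1 - x + x^2/2) - Real.exp (-x) := by
    refine nonneg_of_deriv _ (fun x => Real.exp (-x) - (1 - x)) (fun x => ?_) (by simp) h1
    exact ((((hasDerivAt_const x (1:ℝ)).sub (hasDerivAt_id x)).add
      (((hasDerivAt_pow 2 x)).div_const 2)).sub (hexpneg x)).congr_deriv (by ring)
  have h3 : ∀ x : ℝ, 0 ≤ x → 0 ≤ Real.exp (-x) - (1 - x + x^2/2 - x^3/6) := by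
    refine nonneg_of_deriv _ (fun x => (1 - x + x^2/2) - Real.exp (-x)) (fun x => ?_) (by simp) h2
    exact ((hexpneg x).sub ((((hasDerivAt_const x (1:ℝ)).sub (hasDerivAt_id x)).add
      (((hasDerivAt_pow 2 x)).div_const 2)).sub
      (((hasDerivAt_pow 3 x)).div_const 6))).congr_deriv (by ring)
  have h4 : ∀ x : ℝ, 0 ≤ x → 0 ≤ (1 - x + x^2/2 - x^3/6 + x^4/24) - Real.exp (-x) := by
    refine nonneg_of_deriv _ (fun x => Real.exp (-x) - (1 - x + x^2/2 - x^3/6)) (fun x => ?_)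
      (by norm_num) h3
    exact ((((((hasDerivAt_const x (1:ℝ)).sub (hasDerivAt_id x)).add
      (((hasDerivAt_pow 2 x)).div_const 2)).sub
      (((hasDerivAt_pow 3 x)).div_const 6)).add
      (((hasDerivAt_pow 4 x)).div_const 24)).sub (hexpneg x)).congr_deriv (by ring)
  have h5 : ∀ x : ℝ, 0 ≤ x → 0 ≤ Real.exp (-x) - (1 - x + x^2/2 - x^3/6 + x^4/24 - x^5/120) := by
    refine nonneg_of_deriv _
      (fun x => (1 - x + x^2/2 - x^3/6 + x^4/24) - Real.exp (-x)) (fun x => ?_) (by norm_num) h4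
    exact ((hexpneg x).sub (((((((hasDerivAt_const x (1:ℝ)).sub (hasDerivAt_id x)).add
      (((hasDerivAt_pow 2 x)).div_const 2)).sub
      (((hasDerivAt_pow 3 x)).div_const 6)).add
      (((hasDerivAt_pow 4 x)).div_const 24)).sub
      (((hasDerivAt_pow 5 x)).div_const 120)))).congr_deriv (by ring)
  have h6 : ∀ x : ℝ, 0 ≤ x →
      0 ≤ (1 - x + x^2/2 - x^3/6 + x^4/24 - x^5/120 + x^6/720) - Real.exp (-x) := by
    refine nonneg_of_deriv _
      (fun x => Real.exp (-x) - (1 - x + x^2/2 - x^3/6 + x^4/24 - x^5/120)) (fun x => ?_)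
      (by norm_num) h5
    exact ((((((((hasDerivAt_const x (1:ℝ)).sub (hasDerivAt_id x)).add
      (((hasDerivAt_pow 2 x)).div_const 2)).sub
      (((hasDerivAt_pow 3 x)).div_const 6)).add
      (((hasDerivAt_pow 4 x)).div_const 24)).sub
      (((hasDerivAt_pow 5 x)).div_const 120)).add
      (((hasDerivAt_pow 6 x)).div_const 720)).sub (hexpneg x)).congr_deriv (by ring)
  have h7 : ∀ x : ℝ, 0 ≤ x →
      0 ≤ Real.exp (-x) - (1 - x + x^2/2 - x^3/6 + x^4/24 - x^5/120 + x^6/720 - x^7/5040) := by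
    refine nonneg_of_deriv _
      (fun x => (1 - x + x^2/2 - x^3/6 + x^4/24 - x^5/120 + x^6/720) - Real.exp (-x))
      (fun x => ?_) (by norm_num) h6
    exact ((hexpneg x).sub (((((((((hasDerivAt_const x (1:ℝ)).sub (hasDerivAt_id x)).add
      (((hasDerivAt_pow 2 x)).div_const 2)).sub
      (((hasDerivAt_pow 3 x)).div_const 6)).add
      (((hasDerivAt_pow 4 x)).div_const 24)).sub
      (((hasDerivAt_pow 5 x)).div_const 120)).add
      (((hasDerivAt_pow 6 x)).div_const 720)).sub
      (((hasDerivAt_pow 7 x)).div_const 5040)))).congr_deriv (by ring)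
  linarith [h7 a ha]

lemma exp_taylor_lb {b : ℝ} (hb : 0 ≤ b) :
    1 + b + b^2/2 + b^3/6 + b^4/24 + b^5/120 + b^6/720 ≤ Real.exp b := by
  have := Real.sum_le_exp_of_nonneg hb 7
  rw [Finset.sum_range_succ, Finset.sum_range_succ, Finset.sum_range_succ,
    Finset.sum_range_succ, Finset.sum_range_succ, Finset.sum_range_succ,
    Finset.sum_range_succ] at this
  norm_num [Nat.factorial] at this
  linarith

lemma polyA {a : ℝ} (h1 : 0 < a) (h2 : a ≤ 13/5) :
    0 < 420 + 1680*a + 2324*a^2 + 1091*a^3 - 111*a^4 - 85*a^5 + 43*a^6 - 15*a^7 + a^8 - a^9 := by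
  nlinarith [mul_pos h1 h1, pow_le_pow_left₀ h1.le h2 3, pow_le_pow_left₀ h1.le h2 5,
    mul_pos (mul_pos h1 h1) h1, sq_nonneg (a^4 - a^3), sq_nonneg (a^3-a^2), sq_nonneg (a^2-a)]

lemma keyA {a : ℝ} (ha : 0 < a) : 2 * Real.exp a < Real.exp (a + a / (1 + a)) + 1 := by
  have h1a : (0:ℝ) < 1 + a := by linarith
  set b : ℝ := a / (1 + a) with hb
  have hb0 : 0 < b := div_pos ha h1a
  have key : 2 < Real.exp b + Real.exp (-a) := by
    rcases le_or_gt a (13/5) with hle | hgt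
    · have hEb := exp_taylor_lb hb0.le
      have hEa := exp_neg_taylor ha.le
      have hpoly := polyA ha hle
      have hid : ((1 + b + b^2/2 + b^3/6 + b^4/24 + b^5/120 + b^6/720)
            + (1 - a + a^2/2 - a^3/6 + a^4/24 - a^5/120 + a^6/720 - a^7/5040) - 2)
            * (5040 * (1 + a)^6)
          = (420 + 1680*a + 2324*a^2 + 1091*a^3 - 111*a^4 - 85*a^5 + 43*a^6 - 15*a^7 + a^8 - a^9)
            * a^4 := by
        rw [hb]
        field_simp
        ring
      have hprod : 0 < ((1 + b + b^2/2 + b^3/6 + b^4/24 + b^5/120 + b^6/720)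
            + (1 - a + a^2/2 - a^3/6 + a^4/24 - a^5/120 + a^6/720 - a^7/5040) - 2)
            * (5040 * (1 + a)^6) := by
        rw [hid]; exact mul_pos hpoly (pow_pos ha 4)
      have hm : (0:ℝ) < 5040 * (1 + a)^6 := by positivity
      nlinarith [hEb, hEa, hprod, hm]
    · have hbgt : (13:ℝ)/18 < b := by
        rw [hb, lt_div_iff₀ h1a]
        linarith
      have h2b : (2:ℝ) < Real.exp b := by
        have hl2 : Real.log 2 < 13/18 := by
          have := Real.log_two_lt_d9
          norm_num at this ⊢
          linarith
        calc (2:ℝ) = Real.exp (Real.log 2) := (Real.exp_log (by norm_num)).symm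
        _ < Real.exp b := Real.exp_lt_exp.mpr (by linarith)
      have := Real.exp_pos (-a)
      linarith
  have hmul := mul_lt_mul_of_pos_left key (Real.exp_pos a)
  rw [mul_add, ← Real.exp_add, ← Real.exp_add] at hmul
  simp only [add_neg_cancel, Real.exp_zero] at hmul
  linarith

lemma keyB {u : ℝ} (hu : 0 < u) : (1 - u) * Real.exp (2 * u) < 1 + u := by
  have hφd : ∀ x : ℝ, HasDerivAt (fun u : ℝ => (1 + u) - (1 - u) * Real.exp (2 * u))
      (1 - (1 - 2 * x) * Real.exp (2 * x)) x := by
    intro x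
    have h2x : HasDerivAt (fun u : ℝ => Real.exp (2 * u)) (Real.exp (2 * x) * 2) x := by
      simpa using ((hasDerivAt_id x).const_mul (2:ℝ)).exp
    exact (((hasDerivAt_const x (1:ℝ)).add (hasDerivAt_id x)).sub
      (((hasDerivAt_const x (1:ℝ)).sub (hasDerivAt_id x)).mul h2x)).congr_deriv (by simp only [Pi.sub_apply, id_eq]; ring)
  have hmono : StrictMonoOn (fun u : ℝ => (1 + u) - (1 - u) * Real.exp (2 * u)) (Ici 0) := by
    apply strictMonoOn_of_deriv_pos (convex_Ici 0)
      (fun y _ => (hφd y).differentiableAt.continuousAt.continuousWithinAt)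
    intro y hy
    rw [interior_Ici] at hy
    rw [(hφd y).deriv]
    have h1 : (1 : ℝ) - 2 * y + 1 < Real.exp (-(2 * y)) + 1 := by
      have := Real.add_one_lt_exp (x := -(2*y)) (by intro hc; nlinarith [mem_Ioi.mp hy])
      linarith
    have h2 : (1 - 2 * y) * Real.exp (2 * y) < 1 := by
      have hp := Real.exp_pos (2 * y)
      have := mul_lt_mul_of_pos_right (show (1:ℝ) - 2*y < Real.exp (-(2*y)) by linarith) hp
      rwa [← Real.exp_add, neg_add_cancel, Real.exp_zero] at this
    linarith
  have h0 : ((fun u : ℝ => (1 + u) - (1 - u) * Real.exp (2 * u)) 0) = 0 := by simp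
  have := hmono (self_mem_Ici) (mem_Ici.mpr hu.le) hu
  rw [h0] at this
  simpa using this

lemma tail_nonneg (F : ℝ → ℝ) (c t : ℝ) (ht : c < t)
    (step : ∀ s, c < s → F (s + 1) < F s)
    (bound : ∀ s, c < s → -(1 / s) < F s) : 0 ≤ F (t + 1) := by
  have chain : ∀ n : ℕ, F (t + 1 + n) ≤ F (t + 1) := by
    intro n
    induction n with
    | zero => simp
    | succ n ih =>
      have hn : (0:ℝ) ≤ (n:ℝ) := n.cast_nonneg
      have h1 : c < t + 1 + n := by linarith
      have h2 := step _ h1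
      have h3 : t + 1 + ((n:ℕ):ℝ) + 1 = t + 1 + ((n+1 : ℕ) : ℝ) := by push_cast; ring
      rw [h3] at h2
      exact le_trans h2.le ih
  have hlim : Tendsto (fun n : ℕ => -(1 / (t + 1 + (n:ℝ)))) atTop (𝓝 0) := by
    have h1 : Tendsto (fun n : ℕ => t + 1 + (n:ℝ)) atTop atTop :=
      tendsto_atTop_add_const_left _ _ tendsto_natCast_atTop_atTop
    have h2 := h1.inv_tendsto_atTop
    have h3 := h2.neg
    simpa [one_div] using h3
  refine le_of_tendsto hlim (Filter.Eventually.of_forall fun n => ?_)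
  have hn : (0:ℝ) ≤ (n:ℝ) := n.cast_nonneg
  have hcn : c < t + 1 + n := by linarith
  exact le_trans (bound _ hcn).le (chain n)

lemma head_pos (F : ℝ → ℝ) (c t : ℝ) (ht : c < t)
    (step : ∀ s, c < s → F (s + 1) < F s)
    (bound : ∀ s, c < s → -(1 / s) < F s) : 0 < F t := by
  have h1 := tail_nonneg F c t ht step bound
  have h2 := step t ht
  linarith

lemma stepA : ∀ s : ℝ, (0:ℝ) < s →
    (fun t => -Real.log (Real.exp (1/t) - 1) - digamma t) (s + 1) <
    (fun t => -Real.log (Real.exp (1/t) - 1) - digamma t) s := by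
  intro s hs
  simp only []
  have hs1 : (0:ℝ) < s + 1 := by linarith
  have hEa : 0 < Real.exp (1/s) - 1 := by
    have := Real.add_one_lt_exp (show 1/s ≠ 0 by positivity)
    have h0 : 0 < 1/s := by positivity
    linarith
  have hEb : 0 < Real.exp (1/(s+1)) - 1 := by
    have := Real.add_one_lt_exp (show 1/(s+1) ≠ 0 by positivity)
    have h0 : 0 < 1/(s+1) := by positivity
    linarith
  have hk := keyA (show 0 < 1/s by positivity)
  rw [show (1/s) / (1 + 1/s) = 1/(s+1) by
    field_simp] at hk
  have hmul : Real.exp (1/s) - 1 < (Real.exp (1/(s+1)) - 1) * Real.exp (1/s) := by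
    have hexpand : (Real.exp (1/(s+1)) - 1) * Real.exp (1/s)
        = Real.exp (1/s + 1/(s+1)) - Real.exp (1/s) := by
      rw [Real.exp_add]; ring
    rw [hexpand]
    linarith
  have hlog := Real.log_lt_log hEa hmul
  rw [Real.log_mul hEb.ne' (Real.exp_pos _).ne', Real.log_exp] at hlog
  rw [digamma_add_one hs]
  linarith

lemma boundA : ∀ s : ℝ, (0:ℝ) < s →
    -(1/s) < (fun t => -Real.log (Real.exp (1/t) - 1) - digamma t) s := by
  intro s hs
  simp only []
  have hEa : 0 < Real.exp (1/s) - 1 := by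
    have := Real.add_one_lt_exp (show 1/s ≠ 0 by positivity)
    have h0 : 0 < 1/s := by positivity
    linarith
  have hlt : Real.exp (1/s) - 1 < (1/s) * Real.exp (1/s) := by
    have h1 := Real.add_one_lt_exp (show -(1/s) ≠ 0 by
      simp only [ne_eq, neg_eq_zero]; positivity)
    have h2 := mul_lt_mul_of_pos_right (show (1:ℝ) - 1/s < Real.exp (-(1/s)) by linarith)
      (Real.exp_pos (1/s))
    rw [← Real.exp_add, neg_add_cancel, Real.exp_zero] at h2
    nlinarith
  have hlog := Real.log_lt_log hEa hlt
  rw [Real.log_mul (by positivity) (Real.exp_pos _).ne', Real.log_exp, one_div,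
    Real.log_inv] at hlog
  simp only [← one_div] at hlog
  have hψ := digamma_le_log hs
  linarith

lemma stepB : ∀ s : ℝ, (1:ℝ)/2 < s →
    (fun t => digamma t - Real.log (t - 1/2)) (s + 1) <
    (fun t => digamma t - Real.log (t - 1/2)) s := by
  intro s hs
  simp only []
  have hs0 : (0:ℝ) < s := by linarith
  have hs2 : (0:ℝ) < s - 1/2 := by linarith
  have hk := keyB (show 0 < 1/(2*s) by positivity)
  rw [show 2 * (1/(2*s)) = 1/s by field_simp] at hk
  have hmul : (s - 1/2) * Real.exp (1/s) < s + 1/2 := by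
    have := mul_lt_mul_of_pos_left hk hs0
    have e1 : s * ((1 - 1/(2*s)) * Real.exp (1/s)) = (s - 1/2) * Real.exp (1/s) := by
      field_simp
    have e2 : s * (1 + 1/(2*s)) = s + 1/2 := by field_simp
    rw [e1, e2] at this
    exact this
  have hlog := Real.log_lt_log (by positivity) hmul
  rw [Real.log_mul hs2.ne' (Real.exp_pos _).ne', Real.log_exp] at hlog
  rw [digamma_add_one hs0, show s + 1 - 1/2 = s + 1/2 by ring]
  linarith

lemma boundB : ∀ s : ℝ, (1:ℝ)/2 < s →
    -(1/s) < (fun t => digamma t - Real.log (t - 1/2)) s := by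
  intro s hs
  simp only []
  have hs0 : (0:ℝ) < s := by linarith
  have hψ := log_sub_le_digamma hs0
  have hlog : Real.log (s - 1/2) < Real.log s := Real.log_lt_log (by linarith) (by linarith)
  linarith

theorem inv_digamma_bounds (x : ℝ) (y : ℝ) (hy : 0 < y) (h : digamma y = x) :
    1 / Real.log (1 + Real.exp (-x)) < y ∧ y < Real.exp x + 1 / 2 := by
  constructor
  · have hApos := head_pos (fun t => -Real.log (Real.exp (1/t) - 1) - digamma t) 0 y hy
      stepA boundA
    rw [h] at hApos
    have hEy : 0 < Real.exp (1/y) - 1 := by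
      have := Real.add_one_lt_exp (show 1/y ≠ 0 by positivity)
      have h0 : 0 < 1/y := by positivity
      linarith
    have hx2 : Real.log (Real.exp (1/y) - 1) < -x := by linarith
    have h3 : Real.exp (1/y) - 1 < Real.exp (-x) := by
      have := Real.exp_lt_exp.mpr hx2
      rwa [Real.exp_log hEy] at this
    have h5 : 1/y < Real.log (1 + Real.exp (-x)) := by
      have h4 : Real.exp (1/y) < 1 + Real.exp (-x) := by linarith
      have := Real.log_lt_log (Real.exp_pos (1/y)) h4
      rwa [Real.log_exp] at this
    have hL : 0 < Real.log (1 + Real.exp (-x)) := lt_trans (by positivity) h5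
    rw [div_lt_iff₀ hL]
    calc (1:ℝ) = y * (1/y) := by field_simp
    _ < y * Real.log (1 + Real.exp (-x)) := mul_lt_mul_of_pos_left h5 hy
  · rcases le_or_gt y (1/2) with hle | hgt
    · have := Real.exp_pos x
      linarith
    · have hBpos := head_pos (fun t => digamma t - Real.log (t - 1/2)) (1/2) y hgt
        stepB boundB
      rw [h] at hBpos
      have h2 : Real.log (y - 1/2) < x := by linarith
      have h3 : y - 1/2 < Real.exp x := by
        have := Real.exp_lt_exp.mpr h2
        rwa [Real.exp_log (by linarith)] at this
      linarith
end

section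
/- For fixed x > 0, the function φ(k) = 1/log(1 + 1/(x+k-1)) - k is strictly increasing in k on [1,∞), and lim_{k→∞} φ(k) = x - 1/2. -/
lemma logA (s : ℝ) (hs : 1 < s) : 2 * Real.log s < s - 1/s := by
  have h : StrictMonoOn (fun s : ℝ => s - s⁻¹ - 2 * Real.log s) (Set.Ici 1) := by
    apply strictMonoOn_of_deriv_pos (convex_Ici 1)
    · apply ContinuousOn.sub (ContinuousOn.sub continuousOn_id ?_) ?_
      · exact ContinuousOn.inv₀ continuousOn_id (fun y hy => by
          have : (1:ℝ) ≤ y := hy; positivity)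
      · exact (continuousOn_const.mul (Real.continuousOn_log.mono (fun y hy => by
          have : (1:ℝ) ≤ y := hy; simp; positivity)))
    · intro y hy
      rw [interior_Ici] at hy
      have hy1 : (1:ℝ) < y := hy
      have hy0 : (0:ℝ) < y := by linarith
      have hd : HasDerivAt (fun s : ℝ => s - s⁻¹ - 2 * Real.log s)
          (1 - (-(y^2)⁻¹) - 2 * y⁻¹) y := by
        exact ((hasDerivAt_id y).sub (hasDerivAt_inv hy0.ne')).sub
          ((Real.hasDerivAt_log hy0.ne').const_mul 2)
      rw [hd.deriv]
      have h2 : (0:ℝ) < (y - 1)^2 := by nlinarith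
      have : 1 - (-(y^2)⁻¹) - 2 * y⁻¹ = ((y-1)^2) / y^2 := by field_simp; ring
      rw [this]; exact div_pos h2 (by positivity)
  have := h (Set.self_mem_Ici) (Set.mem_Ici.2 hs.le) hs
  simp at this
  rw [one_div]
  linarith

lemma logB (y : ℝ) (hy : 1 ≤ y) : 2 * (y - 1) / (y + 1) ≤ Real.log y := by
  have h : MonotoneOn (fun y : ℝ => Real.log y + 4 * (y + 1)⁻¹) (Set.Ici 1) := by
    apply monotoneOn_of_deriv_nonneg (convex_Ici 1)
    · apply ContinuousOn.add
      · exact Real.continuousOn_log.mono (fun z hz => by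
          have : (1:ℝ) ≤ z := hz; simp; positivity)
      · exact continuousOn_const.mul (ContinuousOn.inv₀ (by fun_prop) (fun z hz => by
          have : (1:ℝ) ≤ z := hz; positivity))
    · intro z hz
      rw [interior_Ici] at hz
      have hz1 : (1:ℝ) < z := hz
      have hz0 : (0:ℝ) < z := by linarith
      have hd : HasDerivAt (fun y : ℝ => Real.log y + 4 * (y + 1)⁻¹)
          (z⁻¹ + 4 * (-1 / (z+1)^2)) z := by
        have h1 : HasDerivAt (fun y : ℝ => (y + 1)⁻¹) (-1 / (z+1)^2) z := by
          exact ((hasDerivAt_id z).add_const 1).inv (by positivity)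
        exact (Real.hasDerivAt_log hz0.ne').add (h1.const_mul 4)
      apply DifferentiableAt.differentiableWithinAt hd.differentiableAt
    · intro z hz
      rw [interior_Ici] at hz
      have hz1 : (1:ℝ) < z := hz
      have hz0 : (0:ℝ) < z := by linarith
      have hd : HasDerivAt (fun y : ℝ => Real.log y + 4 * (y + 1)⁻¹)
          (z⁻¹ + 4 * (-1 / (z+1)^2)) z := by
        have h1 : HasDerivAt (fun y : ℝ => (y + 1)⁻¹) (-1 / (z+1)^2) z := by
          exact ((hasDerivAt_id z).add_const 1).inv (by positivity)
        exact (Real.hasDerivAt_log hz0.ne').add (h1.const_mul 4)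
      rw [hd.deriv]
      have : z⁻¹ + 4 * (-1 / (z+1)^2) = (z-1)^2 / (z * (z+1)^2) := by field_simp; ring
      rw [this]; positivity
  have := h Set.self_mem_Ici (Set.mem_Ici.2 hy) hy
  simp at this
  have hy1 : (0:ℝ) < y + 1 := by linarith
  rw [div_le_iff₀ hy1]
  have key : 2 ≤ Real.log y + 4 * (y+1)⁻¹ := by norm_num at this; linarith
  have : 2 * (y - 1) = (2 - 4 * (y+1)⁻¹) * (y+1) := by field_simp; ring
  rw [this]
  apply mul_le_mul_of_nonneg_right (by linarith) (by linarith)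


-- key inequality: (log(1+1/t))² (t²+t) < 1 for t > 0
lemma keyIneq (t : ℝ) (ht : 0 < t) :
    (Real.log (1 + 1/t))^2 * (t^2 + t) < 1 := by
  have hy : (1:ℝ) < 1 + 1/t := by
    have : (0:ℝ) < 1/t := by positivity
    linarith
  set s := Real.sqrt (1 + 1/t) with hsdef
  have hs1 : 1 < s := by
    nlinarith [Real.sq_sqrt (show (0:ℝ) ≤ 1+1/t by linarith), Real.sqrt_nonneg (1+1/t)]
  have hs0 : 0 < s := by linarith
  have hsq : s^2 = 1 + 1/t := Real.sq_sqrt (by linarith)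
  have hlog : Real.log (1 + 1/t) = 2 * Real.log s := by
    rw [← hsq, Real.log_pow]; push_cast; ring
  have hA := logA s hs1
  have hApos : 0 < s - 1/s := by
    have : 1/s < 1 := by rw [div_lt_one hs0]; exact hs1
    linarith
  have hlogpos : 0 < Real.log (1 + 1/t) := Real.log_pos hy
  have hsqlt : (Real.log (1 + 1/t))^2 < (s - 1/s)^2 := by
    rw [hlog]
    apply sq_lt_sq' _ hA
    nlinarith [Real.log_pos hs1]
  have hexp : (s - 1/s)^2 * (t^2 + t) = 1 := by
    have h1 : (s - 1/s)^2 = s^2 - 2 + (s^2)⁻¹ := by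
      field_simp; ring
    rw [h1, hsq]
    field_simp
    ring
  calc (Real.log (1 + 1/t))^2 * (t^2 + t) < (s - 1/s)^2 * (t^2 + t) := by
        apply mul_lt_mul_of_pos_right hsqlt (by positivity)
    _ = 1 := hexp


open Filter in
theorem phi_strictMono_and_limit (x : ℝ) (hx : 0 < x) :
    StrictMonoOn (fun k : ℝ => 1 / Real.log (1 + 1 / (x + k - 1)) - k) (Set.Ici (1 : ℝ)) ∧
      Tendsto (fun k : ℝ => 1 / Real.log (1 + 1 / (x + k - 1)) - k) atTop
        (nhds (x - 1 / 2)) := by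
  have htpos : ∀ k : ℝ, 1 ≤ k → 0 < x + k - 1 := fun k hk => by linarith
  have hy1 : ∀ k : ℝ, 1 ≤ k → 1 < 1 + 1 / (x + k - 1) := fun k hk => by
    have := htpos k hk
    have : 0 < 1 / (x + k - 1) := by positivity
    linarith
  have hLpos : ∀ k : ℝ, 1 ≤ k → 0 < Real.log (1 + 1 / (x + k - 1)) :=
    fun k hk => Real.log_pos (hy1 k hk)
  constructor
  · apply strictMonoOn_of_deriv_pos (convex_Ici 1)
    · apply ContinuousOn.sub _ continuousOn_id
      apply ContinuousOn.div continuousOn_const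
      · apply ContinuousOn.log
        · exact continuousOn_const.add (continuousOn_const.div (by fun_prop)
            (fun k hk => (htpos k hk).ne'))
        · exact fun k hk => by have := hy1 k hk; linarith
      · exact fun k hk => (hLpos k hk).ne'
    · intro k hk
      rw [interior_Ici] at hk
      have hk1 : (1:ℝ) < k := hk
      set t := x + k - 1 with htdef
      have ht : 0 < t := htpos k hk1.le
      have hyy : (0:ℝ) < 1 + t⁻¹ := by positivity
      set L := Real.log (1 + t⁻¹) with hLdef
      have hL : 0 < L := by
        rw [hLdef]
        apply Real.log_pos
        have h0 : 0 < t⁻¹ := by positivity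
        linarith
      have h1 : HasDerivAt (fun k : ℝ => x + k - 1) 1 k :=
        ((hasDerivAt_id k).const_add x).sub_const 1
      have h2 : HasDerivAt (fun k : ℝ => (x + k - 1)⁻¹) (-1 / t^2) k := h1.inv ht.ne'
      have h3 : HasDerivAt (fun k : ℝ => 1 + (x + k - 1)⁻¹) (-1 / t^2) k := h2.const_add 1
      have h4 : HasDerivAt (fun k : ℝ => Real.log (1 + (x + k - 1)⁻¹))
          ((-1 / t^2) / (1 + t⁻¹)) k := h3.log hyy.ne'
      have h5 : HasDerivAt (fun k : ℝ => (Real.log (1 + (x + k - 1)⁻¹))⁻¹)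
          (-((-1 / t^2) / (1 + t⁻¹)) / L^2) k := h4.inv hL.ne'
      have h6 : HasDerivAt (fun k : ℝ => (Real.log (1 + (x + k - 1)⁻¹))⁻¹ - k)
          (-((-1 / t^2) / (1 + t⁻¹)) / L^2 - 1) k := h5.sub (hasDerivAt_id k)
      have h7 : HasDerivAt (fun k : ℝ => 1 / Real.log (1 + 1 / (x + k - 1)) - k)
          (-((-1 / t^2) / (1 + t⁻¹)) / L^2 - 1) k := by
        simpa only [one_div] using h6
      rw [h7.deriv]
      have key : L^2 * (t^2 + t) < 1 := by
        have := keyIneq t ht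
        rw [hLdef, ← one_div]
        exact this
      have expr : -((-1 / t^2) / (1 + t⁻¹)) / L^2 = 1 / ((t^2 + t) * L^2) := by
        field_simp
      rw [expr]
      have hpos : 0 < (t^2 + t) * L^2 := by positivity
      have : 1 < 1 / ((t^2 + t) * L^2) := (one_lt_div hpos).2 (by nlinarith)
      linarith
  · -- limit
    have htends : Tendsto (fun k : ℝ => x + k - 1) atTop atTop := by
      apply tendsto_atTop_add_const_right _ (-1)
      simpa [sub_eq_add_neg] using tendsto_atTop_add_const_left _ x (tendsto_id (α := ℝ))
    have hinv : Tendsto (fun k : ℝ => 1 / (x + k - 1)) atTop (nhds 0) := by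
      simpa [one_div, Pi.inv_def] using htends.inv_tendsto_atTop
    have h2 : Tendsto (fun k : ℝ => 2 + 1 / (x + k - 1)) atTop (nhds 2) := by
      simpa using tendsto_const_nhds.add hinv
    have h3 : Tendsto (fun k : ℝ => 1 / (2 + 1 / (x + k - 1))) atTop (nhds (1/2)) := by
      simpa [one_div] using h2.inv₀ (by norm_num : (2:ℝ) ≠ 0)
    have hg : Tendsto (fun k : ℝ => 1 / (2 + 1 / (x + k - 1)) + (x - 1)) atTop
        (nhds (x - 1/2)) := by
      have := h3.add_const (x - 1)
      have e : (1:ℝ)/2 + (x - 1) = x - 1/2 := by ring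
      rwa [e] at this
    apply tendsto_of_tendsto_of_tendsto_of_le_of_le' hg tendsto_const_nhds
    · -- lower bound
      filter_upwards [eventually_ge_atTop (1:ℝ)] with k hk
      set t := x + k - 1 with htdef
      have ht : 0 < t := htpos k hk
      have hyy := hy1 k hk
      set L := Real.log (1 + 1/t) with hLdef
      have hL : 0 < L := hLpos k hk
      have hA := logA (1 + 1/t) hyy
      -- 2L < (1+1/t) - 1/(1+1/t) = (2t+1)/(t*(t+1))
      have e1 : (1 + 1/t) - 1/(1 + 1/t) = (2*t+1)/(t*(t+1)) := by
        field_simp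
        ring
      have hLlt : L < (2*t+1)/(2*(t*(t+1))) := by
        rw [e1] at hA
        rw [hLdef]
        have : (2*t+1)/(t*(t+1)) = 2 * ((2*t+1)/(2*(t*(t+1)))) := by
          field_simp
        rw [this] at hA
        linarith
      have hBpos : 0 < (2*t+1)/(2*(t*(t+1))) := by positivity
      have hinvlt : 1 / ((2*t+1)/(2*(t*(t+1)))) < 1 / L :=
        one_div_lt_one_div_of_lt hL hLlt
      have e2 : 1 / ((2*t+1)/(2*(t*(t+1)))) = 2*(t*(t+1))/(2*t+1) := one_div_div _ _
      have e3 : 1 / (2 + 1/t) = t / (2*t+1) := by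
        field_simp
      have e4 : 2*(t*(t+1))/(2*t+1) - k = t/(2*t+1) + (x - 1) := by
        have h2t : (0:ℝ) < 2*t+1 := by linarith
        field_simp
        ring_nf
        rw [htdef]; ring
      rw [e3]
      rw [e2] at hinvlt
      linarith
    · -- upper bound
      filter_upwards [eventually_ge_atTop (1:ℝ)] with k hk
      set t := x + k - 1 with htdef
      have ht : 0 < t := htpos k hk
      have hyy := hy1 k hk
      set L := Real.log (1 + 1/t) with hLdef
      have hL : 0 < L := hLpos k hk
      have hB := logB (1 + 1/t) hyy.le
      have e1 : 2 * ((1 + 1/t) - 1) / ((1 + 1/t) + 1) = 2/(2*t+1) := by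
        field_simp
        ring
      rw [e1] at hB
      have h2t : (0:ℝ) < 2/(2*t+1) := by positivity
      have hle : 1 / L ≤ 1 / (2/(2*t+1)) := one_div_le_one_div_of_le h2t hB
      have e2 : 1 / (2/(2*t+1)) = (2*t+1)/2 := one_div_div _ _
      rw [e2] at hle
      have : t = x + k - 1 := htdef
      linarith
end

section
/- The function g(u) = 1/log(1 + 1/u) - u is strictly increasing on (0, ∞). -/
open Real Set

lemma two_log_lt (t : ℝ) (ht : 1 < t) : 2 * Real.log t < t - 1 / t := by
  have hmono : StrictMonoOn (fun t : ℝ => t - 1 / t - 2 * Real.log t) (Set.Ici 1) := by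
    apply StrictMonoOn.mono (s := Set.Ici (1:ℝ)) ?_ (le_refl _)
    apply strictMonoOn_of_deriv_pos (convex_Ici 1)
    · apply ContinuousOn.sub
      · exact (continuousOn_id.sub (continuousOn_const.div continuousOn_id
          (fun x hx => ne_of_gt (lt_of_lt_of_le zero_lt_one hx))))
      · exact continuousOn_const.mul (Real.continuousOn_log.comp continuousOn_id
          (fun x hx => by
            simp only [Set.mem_compl_iff, Set.mem_singleton_iff, id]
            exact ne_of_gt (lt_of_lt_of_le zero_lt_one hx)))
    · intro x hx
      rw [interior_Ici] at hx
      simp only [Set.mem_Ioi] at hx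
      have hx0 : x ≠ 0 := by positivity
      have hd : HasDerivAt (fun t : ℝ => t - 1 / t - 2 * Real.log t)
          (1 - (-(x^2)⁻¹) - 2 * x⁻¹) x := by
        have h1 : HasDerivAt (fun t : ℝ => 1 / t) (-(x^2)⁻¹) x := by
          simpa [one_div] using hasDerivAt_inv hx0
        have h2 : HasDerivAt (fun t : ℝ => 2 * Real.log t) (2 * x⁻¹) x :=
          (Real.hasDerivAt_log hx0).const_mul 2
        exact ((hasDerivAt_id x).sub h1).sub h2
      rw [hd.deriv]
      have h1 : (0:ℝ) < x := by linarith
      have : (0:ℝ) < (1 - x⁻¹)^2 := by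
        have : x⁻¹ < 1 := by rw [inv_lt_one_iff₀]; right; exact hx
        nlinarith
      have hx2 : (x^2)⁻¹ = x⁻¹ * x⁻¹ := by rw [sq, mul_inv]
      nlinarith [this, sq_nonneg (x⁻¹)]
  have h := hmono (Set.self_mem_Ici) (Set.mem_Ici.mpr ht.le) ht
  simp only [Real.log_one] at h
  norm_num at h
  rw [one_div]
  linarith

lemma log_lt_inv_sqrt (u : ℝ) (hu : 0 < u) :
    Real.log (1 + 1 / u) < 1 / Real.sqrt (u * (u + 1)) := by
  set t := Real.sqrt ((u + 1) / u) with ht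
  have hv : (1:ℝ) < (u + 1) / u := by
    rw [lt_div_iff₀ hu]; linarith
  have ht1 : 1 < t := by
    rw [ht]
    exact (Real.lt_sqrt (by positivity)).mpr (by rw [one_pow]; exact hv)
  have ht0 : 0 < t := by linarith
  have hts : t ^ 2 = (u + 1) / u := Real.sq_sqrt (by positivity)
  have hlog : Real.log (1 + 1 / u) = 2 * Real.log t := by
    have heq : (1:ℝ) + 1 / u = t ^ 2 := by rw [hts]; field_simp
    rw [heq, Real.log_pow]
    norm_num
  have key := two_log_lt t ht1
  rw [hlog]
  have hst : t - 1 / t = 1 / Real.sqrt (u * (u + 1)) := by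
    have hsqrt : Real.sqrt (u * (u + 1)) = Real.sqrt u * Real.sqrt (u + 1) :=
      Real.sqrt_mul hu.le _
    have htval : t = Real.sqrt (u + 1) / Real.sqrt u := by
      rw [ht]
      exact Real.sqrt_div (by positivity) u
    have hsu : (0:ℝ) < Real.sqrt u := Real.sqrt_pos.mpr hu
    have hsu1 : (0:ℝ) < Real.sqrt (u + 1) := Real.sqrt_pos.mpr (by linarith)
    have h1 : Real.sqrt (u+1) * Real.sqrt (u+1) = u + 1 := Real.mul_self_sqrt (by linarith)
    have h2 : Real.sqrt u * Real.sqrt u = u := Real.mul_self_sqrt hu.le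
    rw [htval, hsqrt]
    field_simp
    nlinarith [h1, h2]
  linarith [hst ▸ key]

theorem g_strictMono :
    StrictMonoOn (fun u : ℝ => 1 / Real.log (1 + 1 / u) - u) (Set.Ioi (0 : ℝ)) := by
  have hLpos : ∀ u : ℝ, 0 < u → 0 < Real.log (1 + 1 / u) := by
    intro u hu
    apply Real.log_pos
    have : 0 < 1 / u := by positivity
    linarith
  apply strictMonoOn_of_deriv_pos (convex_Ioi 0)
  · apply ContinuousOn.sub _ continuousOn_id
    apply ContinuousOn.div continuousOn_const
    · apply Real.continuousOn_log.comp
      · exact continuousOn_const.add (continuousOn_const.div continuousOn_id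
          (fun x hx => ne_of_gt (by simpa using hx)))
      · intro x hx
        simp only [Set.mem_Ioi] at hx
        simp only [Set.mem_compl_iff, Set.mem_singleton_iff]
        have : 0 < 1 / x := by positivity
        intro h; linarith
    · intro x hx
      exact ne_of_gt (hLpos x (by simpa using hx))
  · intro u hu
    rw [interior_Ioi] at hu
    simp only [Set.mem_Ioi] at hu
    have hu0 : u ≠ 0 := ne_of_gt hu
    have hL : 0 < Real.log (1 + 1 / u) := hLpos u hu
    set L := Real.log (1 + 1 / u) with hLdef
    have h1u : (0:ℝ) < 1 + 1 / u := by positivity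
    have hd : HasDerivAt (fun u : ℝ => 1 / Real.log (1 + 1 / u) - u)
        (-(-(u^2)⁻¹ / (1 + 1/u)) / L ^ 2 - 1) u := by
      have hin : HasDerivAt (fun u : ℝ => 1 + 1 / u) (-(u^2)⁻¹) u := by
        simpa [one_div] using (hasDerivAt_inv hu0).const_add 1
      have hlog : HasDerivAt (fun u : ℝ => Real.log (1 + 1 / u))
          (-(u^2)⁻¹ / (1 + 1/u)) u := hin.log (ne_of_gt h1u)
      have hinvL : HasDerivAt (fun u : ℝ => (Real.log (1 + 1 / u))⁻¹)
          (-(-(u^2)⁻¹ / (1 + 1/u)) / L ^ 2) u := hlog.inv (ne_of_gt hL)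
      simpa [one_div] using hinvL.fun_sub (hasDerivAt_id' u)
    rw [hd.deriv]
    have hkey := log_lt_inv_sqrt u hu
    set s := Real.sqrt (u * (u + 1)) with hs
    have hs0 : 0 < s := Real.sqrt_pos.mpr (by nlinarith)
    have hs2 : s ^ 2 = u * (u + 1) := Real.sq_sqrt (by nlinarith)
    have hL2 : L ^ 2 < 1 / (u * (u + 1)) := by
      have : L ^ 2 < (1 / s) ^ 2 := by
        apply pow_lt_pow_left₀ hkey hL.le
        norm_num
      calc L ^ 2 < (1/s)^2 := this
        _ = 1 / (u * (u+1)) := by rw [div_pow, one_pow, hs2]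
    have hnum : -(-(u^2)⁻¹ / (1 + 1/u)) = (u * (u + 1))⁻¹ := by
      field_simp
    rw [hnum]
    rw [sub_pos, lt_div_iff₀ (by positivity)]
    rw [lt_div_iff₀ (by nlinarith)] at hL2
    have huu : (0:ℝ) < u * (u+1) := by nlinarith
    calc 1 * L ^ 2 = L ^ 2 := one_mul _
      _ < (u * (u+1))⁻¹ := by
          rw [inv_eq_one_div, lt_div_iff₀ huu]; linarith [hL2]
end

section
/- For every positive integer n, the function u ↦ [ (u^{-n} - (u+1)^{-n})/n ]^{-1/(n+1)} - u is strictly increasing on (0,∞). -/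
open MeasureTheory Set

lemma key_ineq (m : ℕ) (hm : 1 ≤ m) (u : ℝ) (hu : 0 < u) :
    (((u ^ m)⁻¹ - ((u + 1) ^ m)⁻¹) / (m : ℝ)) ^ (m + 2)
      < (((u ^ (m + 1))⁻¹ - ((u + 1) ^ (m + 1))⁻¹) / ((m : ℝ) + 1)) ^ (m + 1) := by
  set k : ℕ := m + 1 with hkdef
  have hk2 : 2 ≤ k := by omega
  have hle : u ≤ u + 1 := by linarith
  set μ : Measure ℝ := volume.restrict (Set.Ioc u (u + 1)) with hμ
  haveI : IsProbabilityMeasure μ := by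
    constructor
    rw [hμ, Measure.restrict_apply_univ, Real.volume_Ioc]
    norm_num
  set f : ℝ → ℝ := fun x => x ^ (-(k : ℤ)) with hf
  set p : ℝ := ((k : ℝ) + 1) / k with hp
  have hkR : (0 : ℝ) < k := by positivity
  have hp1 : 1 < p := by
    rw [hp, lt_div_iff₀ hkR]; linarith
  have hppos : 0 < p := by linarith
  set φ : ℝ → ℝ := fun x => x ^ p with hφ
  have hfc : ContinuousOn f (Icc u (u + 1)) := fun x hx =>
    (continuousAt_zpow₀ x _ (Or.inl (ne_of_gt (lt_of_lt_of_le hu hx.1)))).continuousWithinAt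
  have hfint : Integrable f μ := (hfc.integrableOn_Icc).mono_set Ioc_subset_Icc_self
  have hcompc : ContinuousOn (φ ∘ f) (Icc u (u + 1)) := fun x hx =>
    (Real.continuousAt_rpow_const (f x) p (Or.inr hppos.le)).comp_continuousWithinAt (hfc x hx)
  have hgint : Integrable (φ ∘ f) μ := (hcompc.integrableOn_Icc).mono_set Ioc_subset_Icc_self
  have hfs : ∀ᵐ x ∂μ, f x ∈ Ici (0 : ℝ) := by
    filter_upwards [ae_restrict_mem measurableSet_Ioc] with x hx
    have hx0 : 0 < x := lt_trans hu hx.1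
    exact zpow_nonneg hx0.le _
  have hφc : ContinuousOn φ (Ici (0 : ℝ)) := fun x _ =>
    (Real.continuousAt_rpow_const x p (Or.inr hppos.le)).continuousWithinAt
  rcases (strictConvexOn_rpow hp1).ae_eq_const_or_map_average_lt hφc isClosed_Ici hfs hfint
      hgint with h | h
  · -- constant case : contradiction
    exfalso
    set C : ℝ := ⨍ x, f x ∂μ with hC
    have hfeq : f = fun x : ℝ => ((x ^ k)⁻¹) := by
      funext x; rw [hf]; simp [zpow_neg]
    have hms : MeasurableSet {x : ℝ | f x = C} := by
      rw [hfeq]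
      exact (measurable_id.pow_const k).inv (measurableSet_singleton C)
    have h0 : μ {x | ¬ f x = C} = 0 := ae_iff.mp h
    have h1 : μ {x | f x = C} = 1 := by
      have h2 := measure_add_measure_compl (μ := μ) hms
      rw [measure_univ] at h2
      have : {x : ℝ | f x = C}ᶜ = {x | ¬ f x = C} := rfl
      rw [this, h0, add_zero] at h2
      exact h2
    have hss : ({x : ℝ | f x = C} ∩ Ioc u (u + 1)).Subsingleton := by
      intro x hx y hy
      have hx0 : 0 < x := lt_trans hu hx.2.1
      have hy0 : 0 < y := lt_trans hu hy.2.1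
      have hxy : f x = f y := by rw [hx.1, hy.1]
      rw [hfeq] at hxy
      have hxy' : x ^ k = y ^ k := inv_injective hxy
      exact (pow_left_strictMonoOn₀ (by omega : k ≠ 0)).injOn hx0.le hy0.le hxy'
    have hz : μ {x | f x = C} = 0 := by
      rw [hμ, Measure.restrict_apply hms]
      exact hss.measure_zero _
    rw [h1] at hz
    exact one_ne_zero hz
  · -- strict Jensen
    rw [average_eq_integral, average_eq_integral] at h
    have hnotmem : (0 : ℝ) ∉ uIcc u (u + 1) := by
      rw [Set.uIcc_of_le hle]
      intro hmem
      exact absurd hmem.1 (by linarith)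
    have e1 : ∫ x, f x ∂μ
        = ((u + 1) ^ (-(k : ℤ) + 1) - u ^ (-(k : ℤ) + 1)) / ((-(k : ℤ) + 1 : ℤ) : ℝ) := by
      rw [hμ, hf]
      rw [show (∫ x in Set.Ioc u (u+1), x ^ (-(k:ℤ))) = ∫ x in u..(u+1), x ^ (-(k:ℤ)) from
        (intervalIntegral.integral_of_le hle).symm]
      rw [integral_zpow (Or.inr ⟨by omega, hnotmem⟩)]
      push_cast
      ring_nf
    have hcongr : EqOn (φ ∘ f) (fun x : ℝ => x ^ (-(k : ℤ) - 1)) (Set.Ioc u (u + 1)) := by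
      intro x hx
      have hx0 : 0 < x := lt_trans hu hx.1
      have hexp : ((-(k : ℤ) - 1 : ℤ) : ℝ) = ((-(k : ℤ) : ℤ) : ℝ) * p := by
        rw [hp]
        push_cast
        field_simp
        ring
      show (x ^ (-(k : ℤ))) ^ p = x ^ (-(k : ℤ) - 1)
      calc (x ^ (-(k : ℤ))) ^ p = (x ^ (((-(k : ℤ) : ℤ)) : ℝ)) ^ p := by
            rw [Real.rpow_intCast]
        _ = x ^ ((((-(k : ℤ) : ℤ)) : ℝ) * p) := (Real.rpow_mul hx0.le _ _).symm
        _ = x ^ (((-(k : ℤ) - 1 : ℤ)) : ℝ) := by rw [hexp]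
        _ = x ^ (-(k : ℤ) - 1) := Real.rpow_intCast _ _
    have e2 : ∫ x, φ (f x) ∂μ
        = ((u + 1) ^ (-(k : ℤ)) - u ^ (-(k : ℤ))) / ((-(k : ℤ) : ℤ) : ℝ) := by
      rw [hμ]
      rw [show (∫ x in Set.Ioc u (u+1), φ (f x)) = ∫ x in Set.Ioc u (u+1), x ^ (-(k:ℤ) - 1) from
        setIntegral_congr_fun measurableSet_Ioc hcongr]
      rw [show (∫ x in Set.Ioc u (u+1), x ^ (-(k:ℤ) - 1)) = ∫ x in u..(u+1), x ^ (-(k:ℤ) - 1) from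
        (intervalIntegral.integral_of_le hle).symm]
      rw [integral_zpow (Or.inr ⟨by omega, hnotmem⟩)]
      push_cast
      ring_nf
    rw [e1, e2] at h
    -- rewrite in terms of the target quantities
    set c₁ : ℝ := ((u ^ m)⁻¹ - ((u + 1) ^ m)⁻¹) / (m : ℝ) with hc₁
    set c₂ : ℝ := ((u ^ (m + 1))⁻¹ - ((u + 1) ^ (m + 1))⁻¹) / ((m : ℝ) + 1) with hc₂
    have hu1 : (0 : ℝ) < u + 1 := by linarith
    have hA : ((u + 1) ^ (-(k : ℤ) + 1) - u ^ (-(k : ℤ) + 1)) / ((-(k : ℤ) + 1 : ℤ) : ℝ) = c₁ := by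
      have hmk : -(k : ℤ) + 1 = -(m : ℤ) := by omega
      rw [hmk, hc₁]
      rw [zpow_neg, zpow_neg, zpow_natCast, zpow_natCast]
      have hmne : (m : ℝ) ≠ 0 := by positivity
      push_cast
      field_simp
      ring
    have hB : ((u + 1) ^ (-(k : ℤ)) - u ^ (-(k : ℤ))) / ((-(k : ℤ) : ℤ) : ℝ) = c₂ := by
      rw [hc₂, zpow_neg, zpow_neg, zpow_natCast, zpow_natCast]
      push_cast [hkdef]
      rw [div_neg, ← neg_div, neg_sub]
    rw [hA, hB] at h
    -- h : φ c₁ < c₂, i.e. c₁ ^ p < c₂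
    have hc₁pos : 0 < c₁ := by
      rw [hc₁]
      apply div_pos _ (by exact_mod_cast Nat.pos_of_ne_zero (by omega))
      rw [sub_pos]
      apply inv_strictAnti₀ (by positivity)
      exact pow_lt_pow_left₀ (by linarith) hu.le (by omega)
    have hc₂pos : 0 < c₂ := by
      rw [hc₂]
      apply div_pos _ (by positivity)
      rw [sub_pos]
      apply inv_strictAnti₀ (by positivity)
      exact pow_lt_pow_left₀ (by linarith) hu.le (by omega)
    have h' : c₁ ^ p < c₂ := h
    have hpow : (c₁ ^ p) ^ k < c₂ ^ k :=
      pow_lt_pow_left₀ h' (Real.rpow_nonneg hc₁pos.le _) (by omega)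
    have hid : (c₁ ^ p) ^ k = c₁ ^ (k + 1) := by
      rw [← Real.rpow_natCast (c₁ ^ p) k, ← Real.rpow_mul hc₁pos.le]
      have : p * (k : ℝ) = ((k + 1 : ℕ) : ℝ) := by
        rw [hp]
        push_cast
        field_simp
      rw [this, Real.rpow_natCast]
    rw [hid] at hpow
    have hk1 : k + 1 = m + 2 := by omega
    rw [hk1] at hpow
    exact hpow

theorem f_strictMono (n : ℕ) (hn : 1 ≤ n) :
    StrictMonoOn
      (fun u : ℝ =>
        ((u ^ (-(n : ℝ)) - (u + 1) ^ (-(n : ℝ))) / n) ^ (-(1 : ℝ) / (n + 1)) - u)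
      (Set.Ioi (0 : ℝ)) := by
  have hnR : (0 : ℝ) < n := by exact_mod_cast Nat.pos_of_ne_zero (by omega)
  set r : ℝ := -(1 : ℝ) / (n + 1) with hr
  set G : ℝ → ℝ := fun u => (u ^ (-(n : ℝ)) - (u + 1) ^ (-(n : ℝ))) / n with hG
  set F : ℝ → ℝ := fun u => G u ^ r - u with hF
  have main : ∀ x ∈ Set.Ioi (0 : ℝ), ∃ d : ℝ, HasDerivAt F d x ∧ 0 < d := by
    intro x hx
    rw [Set.mem_Ioi] at hx
    have hx1 : (0 : ℝ) < x + 1 := by linarith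
    -- rewrite rpow values as inverses of powers
    have hval : ∀ y : ℝ, 0 < y → y ^ (-(n : ℝ)) = (y ^ n)⁻¹ := by
      intro y hy
      rw [← Real.rpow_natCast y n, ← Real.rpow_neg hy.le]
    have hval' : ∀ y : ℝ, 0 < y → y ^ (-(n : ℝ) - 1) = (y ^ (n + 1))⁻¹ := by
      intro y hy
      rw [show -(n : ℝ) - 1 = -((n + 1 : ℕ) : ℝ) by push_cast; ring,
        Real.rpow_neg hy.le, Real.rpow_natCast]
    set c₁ : ℝ := ((x ^ n)⁻¹ - ((x + 1) ^ n)⁻¹) / (n : ℝ) with hc₁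
    set c₂ : ℝ := ((x ^ (n + 1))⁻¹ - ((x + 1) ^ (n + 1))⁻¹) / ((n : ℝ) + 1) with hc₂
    have hc₁pos : 0 < c₁ := by
      rw [hc₁]
      apply div_pos _ hnR
      rw [sub_pos]
      exact inv_strictAnti₀ (by positivity) (pow_lt_pow_left₀ (by linarith) hx.le (by omega))
    have hc₂pos : 0 < c₂ := by
      rw [hc₂]
      apply div_pos _ (by linarith)
      rw [sub_pos]
      exact inv_strictAnti₀ (by positivity) (pow_lt_pow_left₀ (by linarith) hx.le (by omega))
    have hGx : G x = c₁ := by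
      show (x ^ (-(n : ℝ)) - (x + 1) ^ (-(n : ℝ))) / n = c₁
      rw [hc₁, hval x hx, hval (x + 1) hx1]
    have hGpos : 0 < G x := hGx ▸ hc₁pos
    -- derivative of G
    have h1 : HasDerivAt (fun u : ℝ => u ^ (-(n : ℝ))) (-(n : ℝ) * x ^ (-(n : ℝ) - 1)) x :=
      Real.hasDerivAt_rpow_const (Or.inl hx.ne')
    have h2 : HasDerivAt (fun u : ℝ => (u + 1) ^ (-(n : ℝ)))
        (-(n : ℝ) * (x + 1) ^ (-(n : ℝ) - 1)) x := by
      have := (Real.hasDerivAt_rpow_const (p := -(n : ℝ))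
        (Or.inl hx1.ne')).comp x ((hasDerivAt_id x).add_const 1)
      simpa [Function.comp_def] using this
    have hGd : HasDerivAt G
        ((-(n : ℝ) * x ^ (-(n : ℝ) - 1) - -(n : ℝ) * (x + 1) ^ (-(n : ℝ) - 1)) / n) x :=
      (h1.sub h2).div_const _
    have hΦ : HasDerivAt (fun u => G u ^ r)
        (((-(n : ℝ) * x ^ (-(n : ℝ) - 1) - -(n : ℝ) * (x + 1) ^ (-(n : ℝ) - 1)) / n) * r
          * G x ^ (r - 1)) x :=
      hGd.rpow_const (Or.inl hGpos.ne')
    have hFd : HasDerivAt F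
        ((((-(n : ℝ) * x ^ (-(n : ℝ) - 1) - -(n : ℝ) * (x + 1) ^ (-(n : ℝ) - 1)) / n) * r
          * G x ^ (r - 1)) - 1) x := hΦ.sub (hasDerivAt_id x)
    refine ⟨_, hFd, ?_⟩
    rw [sub_pos]
    -- simplify the derivative expression
    have hfac : ((-(n : ℝ) * x ^ (-(n : ℝ) - 1) - -(n : ℝ) * (x + 1) ^ (-(n : ℝ) - 1)) / n) * r
        = c₂ := by
      rw [hval' x hx, hval' (x + 1) hx1, hr, hc₂]
      field_simp
      ring
    rw [hfac, hGx]
    -- now need : 1 < c₂ * c₁ ^ (r - 1)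
    have hq : r - 1 = -(((n + 2 : ℕ) : ℝ) * (((n : ℝ) + 1))⁻¹) := by
      rw [hr]
      push_cast
      field_simp
      ring
    have hkey := key_ineq n hn x hx
    have hlt : c₁ ^ (((n + 2 : ℕ) : ℝ) * (((n : ℝ) + 1))⁻¹) < c₂ := by
      rw [Real.rpow_mul hc₁pos.le, Real.rpow_natCast]
      have := Real.rpow_lt_rpow (by positivity) hkey (by positivity :
        (0 : ℝ) < ((n : ℝ) + 1)⁻¹)
      calc (c₁ ^ (n + 2)) ^ ((n : ℝ) + 1)⁻¹
          < (c₂ ^ (n + 1)) ^ ((n : ℝ) + 1)⁻¹ := this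
        _ = c₂ := by
            rw [← Real.rpow_natCast c₂ (n + 1), ← Real.rpow_mul hc₂pos.le]
            push_cast
            rw [mul_inv_cancel₀ (by positivity), Real.rpow_one]
    rw [hq, Real.rpow_neg hc₁pos.le]
    rw [← div_eq_mul_inv, lt_div_iff₀ (by positivity), one_mul]
    exact hlt
  have cont : ContinuousOn F (Set.Ioi (0 : ℝ)) := by
    intro x hx
    obtain ⟨d, hd, _⟩ := main x hx
    exact hd.continuousAt.continuousWithinAt
  have := strictMonoOn_of_deriv_pos (convex_Ioi (0 : ℝ)) cont ?_
  · exact this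
  · intro x hx
    rw [interior_Ioi] at hx
    obtain ⟨d, hd, hdpos⟩ := main x hx
    rw [hd.deriv]
    exact hdpos
end

section
/- For every positive integer n and all u > 0, [ (u^{-(n+1)} - (u+1)^{-(n+1)})/(n+1) ]^{-1/(n+2)} < [ (u^{-n} - (u+1)^{-n})/n ]^{-1/(n+1)}. -/
open Set intervalIntegral Real

theorem stolarsky_step (n : ℕ) (hn : 1 ≤ n) (u : ℝ) (hu : 0 < u) :
    ((u ^ (-((n : ℝ) + 1)) - (u + 1) ^ (-((n : ℝ) + 1))) / ((n : ℝ) + 1)) ^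
        (-(1 : ℝ) / ((n : ℝ) + 2)) <
      ((u ^ (-(n : ℝ)) - (u + 1) ^ (-(n : ℝ))) / (n : ℝ)) ^ (-(1 : ℝ) / ((n : ℝ) + 1)) := by
  set r : ℝ := (n : ℝ) with hr
  have hr1 : (1 : ℝ) ≤ r := hr ▸ Nat.one_le_cast.mpr hn
  have hr0 : 0 < r := lt_of_lt_of_le one_pos hr1
  have hr1' : (0:ℝ) < r + 1 := by linarith
  have hr2' : (0:ℝ) < r + 2 := by linarith
  have hu1 : u < u + 1 := by linarith
  have h0 : (0:ℝ) ∉ uIcc u (u+1) := by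
    rw [uIcc_of_le hu1.le]
    rintro ⟨h1, h2⟩; linarith
  set A : ℝ := (u ^ (-(r + 1)) - (u + 1) ^ (-(r + 1))) / (r + 1) with hA
  set B : ℝ := (u ^ (-r) - (u + 1) ^ (-r)) / r with hB
  have hApos : 0 < A := by
    apply div_pos _ hr1'
    have := rpow_lt_rpow_of_neg hu hu1 (show -(r+1) < 0 by linarith)
    linarith
  have hBpos : 0 < B := by
    apply div_pos _ hr0
    have := rpow_lt_rpow_of_neg hu hu1 (show -r < 0 by linarith)
    linarith
  have hAint : (∫ x in u..(u+1), x ^ (-(r+2))) = A := by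
    rw [integral_rpow (Or.inr ⟨by intro h; have := neg_injective h; linarith, h0⟩)]
    rw [show (-(r+2) + 1 : ℝ) = -(r+1) by ring, hA]
    rw [div_eq_div_iff (by linarith) hr1'.ne']
    ring
  have hBint : (∫ x in u..(u+1), x ^ (-(r+1))) = B := by
    rw [integral_rpow (Or.inr ⟨by intro h; have := neg_injective h; linarith, h0⟩)]
    rw [show (-(r+1) + 1 : ℝ) = -r by ring, hB]
    rw [div_eq_div_iff (by linarith) hr0.ne']
    ring
  have hposIcc : ∀ x ∈ Icc u (u+1), (0:ℝ) < x := fun x hx => lt_of_lt_of_le hu hx.1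
  have hcont : ∀ c : ℝ, ContinuousOn (fun x : ℝ => x ^ c) (Icc u (u+1)) :=
    fun c => continuousOn_id.rpow_const (fun x hx => Or.inl (hposIcc x hx).ne')
  set q : ℝ := (r + 2) / (r + 1) with hq
  have hq1 : 1 < q := by
    rw [hq, lt_div_iff₀ hr1']; linarith
  have hBq : 0 < B ^ q := rpow_pos_of_pos hBpos _
  have hBne : B ≠ 0 := hBpos.ne'
  -- pointwise rpow composition
  have hfq : ∀ x : ℝ, 0 < x → (x ^ (-(r+1))) ^ q = x ^ (-(r+2)) := by
    intro x hx
    rw [← rpow_mul hx.le]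
    congr 1
    rw [hq]; field_simp
  -- tangent line inequality (non-strict)
  have tangent_le : ∀ x : ℝ, 0 < x →
      q * B ^ q / B * x ^ (-(r+1)) + (-(q-1) * B ^ q) ≤ x ^ (-(r+2)) := by
    intro x hx
    have hf0 : 0 < x ^ (-(r+1)) := rpow_pos_of_pos hx _
    set f : ℝ := x ^ (-(r+1)) with hf
    have hsdiv : 0 < f / B := div_pos hf0 hBpos
    have hs : -1 ≤ f / B - 1 := by linarith
    have hber := one_add_mul_self_le_rpow_one_add hs hq1.le
    rw [show 1 + (f/B - 1) = f/B by ring, div_rpow hf0.le hBpos.le] at hber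
    have h2 : (1 + q * (f/B - 1)) * B ^ q ≤ f ^ q := by
      have := mul_le_mul_of_nonneg_right hber hBq.le
      rwa [div_mul_cancel₀ _ hBq.ne'] at this
    have h3 : q * B ^ q / B * f + (-(q-1) * B ^ q) = (1 + q * (f/B - 1)) * B ^ q := by
      field_simp; ring
    rw [← hfq x hx, ← hf]
    linarith
  -- B is strictly bigger than the value of f at u+1
  have hfub : (u+1) ^ (-(r+1)) < B := by
    rw [← hBint]
    have hc : ((u+1) ^ (-(r+1)) : ℝ) = ∫ _x in u..(u+1), (u+1) ^ (-(r+1)) := by simp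
    rw [hc]
    apply integral_lt_integral_of_continuousOn_of_le_of_exists_lt hu1
      continuousOn_const (hcont _)
    · intro x hx
      exact rpow_le_rpow_of_nonpos (lt_of_lt_of_le hu hx.1.le) hx.2 (by linarith)
    · refine ⟨u, ⟨le_refl u, hu1.le⟩, ?_⟩
      exact rpow_lt_rpow_of_neg hu hu1 (by linarith)
  -- strict tangent at u+1
  have tangent_lt : q * B ^ q / B * (u+1) ^ (-(r+1)) + (-(q-1) * B ^ q)
      < (u+1) ^ (-(r+2)) := by
    have hx : (0:ℝ) < u + 1 := by linarith
    have hf0 : 0 < (u+1) ^ (-(r+1)) := rpow_pos_of_pos hx _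
    set f : ℝ := (u+1) ^ (-(r+1)) with hf
    have hsdiv : 0 < f / B := div_pos hf0 hBpos
    have hs : -1 ≤ f / B - 1 := by linarith
    have hs' : f / B - 1 ≠ 0 := by
      have : f / B < 1 := (div_lt_one hBpos).mpr hfub
      intro h; rw [sub_eq_zero] at h; rw [h] at this; exact lt_irrefl _ this
    have hber := one_add_mul_self_lt_rpow_one_add hs hs' hq1
    rw [show 1 + (f/B - 1) = f/B by ring, div_rpow hf0.le hBpos.le] at hber
    have h2 : (1 + q * (f/B - 1)) * B ^ q < f ^ q := by
      have := mul_lt_mul_of_pos_right hber hBq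
      rwa [div_mul_cancel₀ _ hBq.ne'] at this
    have h3 : q * B ^ q / B * f + (-(q-1) * B ^ q) = (1 + q * (f/B - 1)) * B ^ q := by
      field_simp; ring
    rw [← hfq (u+1) hx, ← hf]
    linarith
  -- strict Jensen: B ^ q < A
  have key : B ^ q < A := by
    have hIntf : IntervalIntegrable (fun x : ℝ => x ^ (-(r+1))) MeasureTheory.volume u (u+1) := by
      apply ContinuousOn.intervalIntegrable
      rw [uIcc_of_le hu1.le]; exact hcont _
    have hIg : (∫ x in u..(u+1),
        (q * B ^ q / B * x ^ (-(r+1)) + (-(q-1) * B ^ q))) = B ^ q := by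
      rw [intervalIntegral.integral_add (hIntf.const_mul _) intervalIntegrable_const,
        intervalIntegral.integral_const_mul, hBint, intervalIntegral.integral_const]
      have : (u + 1 - u : ℝ) = 1 := by ring
      rw [this, one_smul]
      field_simp; ring
    rw [← hIg, ← hAint]
    apply integral_lt_integral_of_continuousOn_of_le_of_exists_lt hu1 _ (hcont _)
    · intro x hx
      exact tangent_le x (lt_of_lt_of_le hu hx.1.le)
    · exact ⟨u + 1, ⟨hu1.le, le_refl _⟩, tangent_lt⟩
    · exact ((continuousOn_const.mul (hcont _)).add continuousOn_const)
  -- conclude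
  have hexp : -(1:ℝ) / (r+2) < 0 := div_neg_of_neg_of_pos (by linarith) hr2'
  have step1 : A ^ (-(1:ℝ)/(r+2)) < (B ^ q) ^ (-(1:ℝ)/(r+2)) :=
    rpow_lt_rpow_of_neg hBq key hexp
  have step2 : (B ^ q) ^ (-(1:ℝ)/(r+2)) = B ^ (-(1:ℝ)/(r+1)) := by
    rw [← rpow_mul hBpos.le]
    congr 1
    rw [hq]; field_simp
  calc A ^ (-(1:ℝ)/(r+2)) < (B ^ q) ^ (-(1:ℝ)/(r+2)) := step1
    _ = B ^ (-(1:ℝ)/(r+1)) := step2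
end

section
/- For distinct positive reals a, b, the generalized mean S_p(a,b) = [(a^p - b^p)/(p(a-b))]^{1/(p-1)} is strictly increasing in p (for p ≠ 0, 1). -/
open MeasureTheory intervalIntegral Real Set

noncomputable def Hs (x p : ℝ) : ℝ := ∫ t in (1:ℝ)..x, t ^ (p - 1)

lemma Hs_intable {x : ℝ} (hx : 1 < x) (c : ℝ) :
    IntervalIntegrable (fun t : ℝ => t ^ c) volume 1 x := by
  apply ContinuousOn.intervalIntegrable
  apply ContinuousOn.rpow_const continuousOn_id
  intro t ht
  rw [uIcc_of_le hx.le] at ht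
  exact Or.inl (by dsimp; linarith [ht.1])

lemma Hs_pos {x : ℝ} (hx : 1 < x) (p : ℝ) : 0 < Hs x p := by
  apply intervalIntegral_pos_of_pos_on (Hs_intable hx _) _ hx
  intro t ht
  exact Real.rpow_pos_of_pos (by linarith [ht.1]) _

lemma Hs_eq {x : ℝ} (hx : 1 < x) {p : ℝ} (hp : p ≠ 0) : Hs x p = (x ^ p - 1) / p := by
  unfold Hs
  rw [integral_rpow]
  · simp [sub_add_cancel, Real.one_rpow]
  · right
    constructor
    · intro h; apply hp; linarith [sub_eq_iff_eq_add.mp h]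
    · rw [uIcc_of_le hx.le]
      intro h
      exact absurd h.1 (by norm_num)


lemma strict_amgm {u v la lb : ℝ} (hu : 0 < u) (hv : 0 < v) (huv : u ≠ v)
    (hla : 0 < la) (hlb : 0 < lb) (hlab : la + lb = 1) :
    u ^ la * v ^ lb < la * u + lb * v := by
  have h := strictConvexOn_exp.2 (mem_univ (Real.log u)) (mem_univ (Real.log v))
    (fun h => huv (by rwa [Real.log_injOn_pos.eq_iff (mem_Ioi.2 hu) (mem_Ioi.2 hv)] at h))
    hla hlb hlab
  simp only [smul_eq_mul, Real.exp_log hu, Real.exp_log hv] at h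
  calc u ^ la * v ^ lb = Real.exp (la * Real.log u + lb * Real.log v) := by
        rw [Real.exp_add, mul_comm la, mul_comm lb, Real.exp_mul, Real.exp_mul,
          Real.exp_log hu, Real.exp_log hv]
    _ < la * u + lb * v := h

lemma Hs_log_convex_key {x p q la lb : ℝ} (hx : 1 < x) (hpq : p ≠ q)
    (hla : 0 < la) (hlb : 0 < lb) (hlab : la + lb = 1) :
    Hs x (la * p + lb * q) < Hs x p ^ la * Hs x q ^ lb := by
  set A := Hs x p with hA'
  set B := Hs x q with hB'
  have hA : 0 < A := Hs_pos hx p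
  have hB : 0 < B := Hs_pos hx q
  set m := la * p + lb * q with hm
  set F : ℝ → ℝ := fun t =>
    la * (t ^ (p - 1) / A) + lb * (t ^ (q - 1) / B)
      - (t ^ (p - 1) / A) ^ la * (t ^ (q - 1) / B) ^ lb with hF
  -- pointwise rewriting on positive t
  have hFeq : ∀ t : ℝ, 0 < t → F t =
      la / A * t ^ (p - 1) + lb / B * t ^ (q - 1) - (A ^ la * B ^ lb)⁻¹ * t ^ (m - 1) := by
    intro t ht
    have h1 : (t ^ (p - 1) / A) ^ la = t ^ ((p - 1) * la) / A ^ la := by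
      rw [Real.div_rpow (Real.rpow_nonneg ht.le _) hA.le, ← Real.rpow_mul ht.le]
    have h2 : (t ^ (q - 1) / B) ^ lb = t ^ ((q - 1) * lb) / B ^ lb := by
      rw [Real.div_rpow (Real.rpow_nonneg ht.le _) hB.le, ← Real.rpow_mul ht.le]
    have h3 : t ^ ((p - 1) * la) * t ^ ((q - 1) * lb) = t ^ (m - 1) := by
      rw [← Real.rpow_add ht]
      congr 1
      rw [hm]; nlinarith [hlab]
    rw [hF]
    simp only
    rw [h1, h2]
    field_simp
    rw [← h3, mul_comm (p - 1) la, mul_comm (q - 1) lb, mul_assoc (A * B)]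
  -- integral value
  have hintm : IntervalIntegrable (fun t : ℝ => (A ^ la * B ^ lb)⁻¹ * t ^ (m - 1)) volume 1 x :=
    (Hs_intable hx _).const_mul _
  have hintp : IntervalIntegrable (fun t : ℝ => la / A * t ^ (p - 1)) volume 1 x :=
    (Hs_intable hx _).const_mul _
  have hintq : IntervalIntegrable (fun t : ℝ => lb / B * t ^ (q - 1)) volume 1 x :=
    (Hs_intable hx _).const_mul _
  have hcong : EqOn F (fun t => la / A * t ^ (p - 1) + lb / B * t ^ (q - 1)
      - (A ^ la * B ^ lb)⁻¹ * t ^ (m - 1)) (uIcc 1 x) := by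
    intro t ht
    rw [uIcc_of_le hx.le] at ht
    exact hFeq t (by linarith [ht.1])
  have hval : (∫ t in (1:ℝ)..x, F t) = 1 - (A ^ la * B ^ lb)⁻¹ * Hs x m := by
    rw [integral_congr hcong, integral_sub (hintp.add hintq) hintm,
      integral_add hintp hintq, intervalIntegral.integral_const_mul, intervalIntegral.integral_const_mul, intervalIntegral.integral_const_mul]
    have : la / A * Hs x p + lb / B * Hs x q = 1 := by
      rw [← hA', ← hB']
      rw [div_mul_cancel₀ la hA.ne', div_mul_cancel₀ lb hB.ne', hlab]
    have e1 : (∫ t in (1:ℝ)..x, t ^ (p - 1)) = A := rfl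
    have e2 : (∫ t in (1:ℝ)..x, t ^ (q - 1)) = B := rfl
    have e3 : (∫ t in (1:ℝ)..x, t ^ (m - 1)) = Hs x m := rfl
    rw [e1, e2, e3] at *
    rw [this]
  -- strict positivity of the integral
  have hABpos : 0 < A ^ la * B ^ lb := mul_pos (Real.rpow_pos_of_pos hA _) (Real.rpow_pos_of_pos hB _)
  set t₀ : ℝ := Real.exp ((Real.log A - Real.log B) / (p - q)) with ht₀
  have hFpos : ∀ t ∈ Ioc (1:ℝ) x, t ≠ t₀ → 0 < F t := by
    intro t ht htne
    have ht0 : (0:ℝ) < t := by linarith [ht.1]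
    have hu : 0 < t ^ (p - 1) / A := div_pos (Real.rpow_pos_of_pos ht0 _) hA
    have hv : 0 < t ^ (q - 1) / B := div_pos (Real.rpow_pos_of_pos ht0 _) hB
    have huv : t ^ (p - 1) / A ≠ t ^ (q - 1) / B := by
      intro h
      apply htne
      have hAB : t ^ (p - q) = A / B := by
        rw [show p - q = (p - 1) - (q - 1) by ring, Real.rpow_sub ht0]
        field_simp at h ⊢
        linarith [h]
      have hlog : (p - q) * Real.log t = Real.log A - Real.log B := by
        rw [← Real.log_rpow ht0, hAB, Real.log_div hA.ne' hB.ne']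
      have : Real.log t = (Real.log A - Real.log B) / (p - q) := by
        rw [← hlog]
        field_simp [sub_ne_zero.2 hpq]
      rw [ht₀, ← this, Real.exp_log ht0]
    have := strict_amgm hu hv huv hla hlb hlab
    rw [hF]; simp only; linarith
  have hFnonneg : ∀ t ∈ Ioc (1:ℝ) x, 0 ≤ F t := by
    intro t ht
    have ht0 : (0:ℝ) < t := by linarith [ht.1]
    have h1 : (0:ℝ) ≤ t ^ (p - 1) / A := div_nonneg (Real.rpow_nonneg ht0.le _) hA.le
    have h2 : (0:ℝ) ≤ t ^ (q - 1) / B := div_nonneg (Real.rpow_nonneg ht0.le _) hB.le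
    have := Real.geom_mean_le_arith_mean2_weighted hla.le hlb.le h1 h2 hlab
    rw [hF]; simp only; linarith
  have hpos : 0 < ∫ t in (1:ℝ)..x, F t := by
    rw [integral_congr hcong]
    rw [integral_pos_iff_support_of_nonneg_ae']
    · refine ⟨hx, ?_⟩
      have hsub : Ioc (1:ℝ) x \ {t₀} ⊆
          Function.support (fun t => la / A * t ^ (p - 1) + lb / B * t ^ (q - 1)
            - (A ^ la * B ^ lb)⁻¹ * t ^ (m - 1)) ∩ Ioc 1 x := by
        intro t ⟨ht, htne⟩
        refine ⟨?_, ht⟩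
        have ht0 : (0:ℝ) < t := by linarith [ht.1]
        have : 0 < F t := hFpos t ht (by simpa using htne)
        rw [hFeq t ht0] at this
        exact Function.mem_support.2 this.ne'
      calc (0:ENNReal) < volume (Ioc (1:ℝ) x \ {t₀}) := by
            rw [measure_diff_null (measure_singleton _), Real.volume_Ioc]
            exact ENNReal.ofReal_pos.2 (by linarith)
        _ ≤ _ := measure_mono hsub
    · rw [uIoc_of_le hx.le]
      refine (ae_restrict_iff' measurableSet_Ioc).mpr (ae_of_all _ fun t ht => ?_)
      have ht0 : (0:ℝ) < t := by linarith [ht.1]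
      have := hFnonneg t ht
      rwa [hFeq t ht0] at this
    · exact (hintp.add hintq).sub hintm
  rw [hval] at hpos
  have h1 : (A ^ la * B ^ lb)⁻¹ * Hs x m < 1 := by linarith
  calc Hs x m = (A ^ la * B ^ lb) * ((A ^ la * B ^ lb)⁻¹ * Hs x m) := by
        field_simp
    _ < (A ^ la * B ^ lb) * 1 := mul_lt_mul_of_pos_left h1 hABpos
    _ = A ^ la * B ^ lb := mul_one _

lemma Hs_log_strictConvex {x : ℝ} (hx : 1 < x) :
    StrictConvexOn ℝ univ fun p => Real.log (Hs x p) := by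
  refine ⟨convex_univ, fun p _ q _ hpq la lb hla hlb hlab => ?_⟩
  simp only [smul_eq_mul]
  have key := Hs_log_convex_key hx hpq hla hlb hlab
  calc Real.log (Hs x (la * p + lb * q)) < Real.log (Hs x p ^ la * Hs x q ^ lb) :=
        Real.log_lt_log (Hs_pos hx _) key
    _ = la * Real.log (Hs x p) + lb * Real.log (Hs x q) := by
        rw [Real.log_mul (Real.rpow_pos_of_pos (Hs_pos hx p) la).ne'
          (Real.rpow_pos_of_pos (Hs_pos hx q) lb).ne',
          Real.log_rpow (Hs_pos hx p), Real.log_rpow (Hs_pos hx q)]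

lemma stolarsky_key (a b : ℝ) (hb : 0 < b) (hba : b < a) :
    StrictMonoOn (fun p : ℝ => ((a ^ p - b ^ p) / (p * (a - b))) ^ (1 / (p - 1)))
      {p : ℝ | p ≠ 0 ∧ p ≠ 1} := by
  have ha : 0 < a := hb.trans hba
  set x := a / b with hxdef
  have hx : 1 < x := (one_lt_div hb).2 hba
  -- rewrite the function
  have hrepr : ∀ p : ℝ, p ≠ 0 → p ≠ 1 →
      ((a ^ p - b ^ p) / (p * (a - b))) ^ (1 / (p - 1)) =
        Real.exp (Real.log b +
          (Real.log (Hs x p) - Real.log (Hs x 1)) / (p - 1)) := by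
    intro p hp0 hp1
    have hp1' : p - 1 ≠ 0 := sub_ne_zero.2 hp1
    have hHp : Hs x p = (x ^ p - 1) / p := Hs_eq hx hp0
    have hH1 : Hs x 1 = x - 1 := by
      rw [Hs_eq hx one_ne_zero, Real.rpow_one, div_one]
    have hbase : (a ^ p - b ^ p) / (p * (a - b)) = b ^ (p - 1) * (Hs x p / Hs x 1) := by
      rw [hHp, hH1]
      have hab : a = b * x := by rw [hxdef]; field_simp [hb.ne']
      rw [hab, Real.mul_rpow hb.le (by positivity), Real.rpow_sub hb, Real.rpow_one]
      field_simp
    have hHppos := Hs_pos hx p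
    have hH1pos := Hs_pos hx 1
    have hbasepos : 0 < b ^ (p - 1) * (Hs x p / Hs x 1) := by positivity
    rw [hbase, Real.rpow_def_of_pos hbasepos]
    congr 1
    rw [Real.log_mul (by positivity) (by positivity), Real.log_rpow hb,
      Real.log_div hHppos.ne' hH1pos.ne']
    field_simp
  intro p hp q hq hpq
  simp only [mem_setOf_eq] at hp hq
  simp only []
  rw [hrepr p hp.1 hp.2, hrepr q hq.1 hq.2]
  apply Real.exp_lt_exp.2
  have := (Hs_log_strictConvex hx).secant_strict_mono (a := 1)
    (mem_univ 1) (mem_univ p) (mem_univ q) hp.2 hq.2 hpq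
  linarith

theorem stolarsky_strictMono (a b : ℝ) (ha : 0 < a) (hb : 0 < b) (hab : a ≠ b) :
    StrictMonoOn (fun p : ℝ => ((a ^ p - b ^ p) / (p * (a - b))) ^ (1 / (p - 1)))
      {p : ℝ | p ≠ 0 ∧ p ≠ 1} := by
  rcases hab.lt_or_gt with h | h
  · have heq : (fun p : ℝ => ((a ^ p - b ^ p) / (p * (a - b))) ^ (1 / (p - 1)))
        = fun p : ℝ => ((b ^ p - a ^ p) / (p * (b - a))) ^ (1 / (p - 1)) := by
      funext p
      rw [show (a ^ p - b ^ p) / (p * (a - b)) = (b ^ p - a ^ p) / (p * (b - a)) by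
        rw [← neg_div_neg_eq]; ring_nf]
    rw [heq]
    exact stolarsky_key b a ha h
  · exact stolarsky_key a b hb h
end

section
/- For every positive integer n, lim_{u→∞} ( [ (u^{-n} - (u+1)^{-n})/n ]^{-1/(n+1)} - u ) = 1/2. -/
open Finset in
open Filter in
theorem f_limit (n : ℕ) (hn : 1 ≤ n) :
    Tendsto
      (fun u : ℝ =>
        ((u ^ (-(n : ℝ)) - (u + 1) ^ (-(n : ℝ))) / n) ^ (-(1 : ℝ) / (n + 1)) - u)
      atTop (nhds (1 / 2)) := by
  set p : ℝ := -(1:ℝ)/(n+1) with hpdef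
  set ψ : ℝ → ℝ := fun t => (∑ k ∈ range n, (1+t)^k) / (n * (1+t)^n) with hψdef
  have hn0 : (n:ℝ) ≠ 0 := Nat.cast_ne_zero.mpr (by omega)
  have hn1 : (n:ℝ) + 1 ≠ 0 := by positivity
  have hψ0 : ψ 0 = 1 := by
    simp [hψdef]
    omega
  have hq : HasDerivAt (fun t : ℝ => ∑ k ∈ range n, (1+t)^k) (∑ k ∈ range n, (k:ℝ)) 0 := by
    apply HasDerivAt.fun_sum
    intro k _
    have h1 : HasDerivAt (fun t : ℝ => 1 + t) 1 0 := (hasDerivAt_id 0).const_add 1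
    simpa using h1.fun_pow k
  have hS : (∑ k ∈ range n, (k:ℝ)) = n * (n - 1) / 2 := by
    have := Finset.sum_range_id_mul_two n
    have h2 : ((∑ i ∈ range n, i : ℕ) : ℝ) * 2 = (n:ℝ) * ((n:ℝ) - 1) := by
      have h3 := congrArg (fun m : ℕ => (m:ℝ)) this
      push_cast [Nat.cast_sub hn] at h3
      push_cast
      linarith
    push_cast at h2 ⊢
    linarith
  have hg : HasDerivAt (fun t : ℝ => (n:ℝ) * (1+t)^n) ((n:ℝ) * n) 0 := by
    have h1 : HasDerivAt (fun t : ℝ => 1 + t) 1 0 := (hasDerivAt_id 0).const_add 1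
    simpa using (h1.pow n).const_mul (n:ℝ)
  have hg0 : (n:ℝ) * (1+(0:ℝ))^n ≠ 0 := by simpa using hn0
  have hψ : HasDerivAt ψ (-((n:ℝ)+1)/2) 0 := by
    have := hq.fun_div hg hg0
    refine this.congr_deriv ?_
    simp [hS]
    field_simp
    ring
  have hφ : HasDerivAt (fun t => ψ t ^ p) (1/2) 0 := by
    have := hψ.rpow_const (p := p) (Or.inl (by rw [hψ0]; norm_num))
    convert this using 1
    rw [hψ0, Real.one_rpow, hpdef]
    field_simp
  have hslope : Tendsto (slope (fun t => ψ t ^ p) 0) (nhdsWithin 0 {(0:ℝ)}ᶜ) (nhds (1/2)) :=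
    hasDerivAt_iff_tendsto_slope.mp hφ
  have hinv : Tendsto (fun u : ℝ => 1/u) atTop (nhdsWithin 0 {(0:ℝ)}ᶜ) := by
    apply tendsto_nhdsWithin_of_tendsto_nhds_of_eventually_within
    · simpa [one_div] using tendsto_inv_atTop_zero
    · filter_upwards [eventually_gt_atTop (0:ℝ)] with u hu
      simp [hu.ne']
  have hcomp := hslope.comp hinv
  apply hcomp.congr'
  filter_upwards [eventually_gt_atTop (0:ℝ)] with u hu
  have hu1 : (0:ℝ) < u + 1 := by linarith
  have key : ((u ^ (-(n : ℝ)) - (u + 1) ^ (-(n : ℝ))) / n) ^ p = u * ψ (1/u) ^ p := by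
    have hx : (1:ℝ) + 1/u = (u+1)/u := by field_simp
    have hq' : (∑ k ∈ range n, ((1:ℝ) + 1/u)^k) = (((u+1)/u)^n - 1) * u := by
      have hgeo := geom_sum_mul ((1:ℝ) + 1/u) n
      have h1 : ((1:ℝ) + 1/u) - 1 = 1/u := by ring
      rw [h1] at hgeo
      rw [hx] at hgeo ⊢
      rw [← hgeo]
      field_simp
    have hbase : (u ^ (-(n : ℝ)) - (u + 1) ^ (-(n : ℝ))) / n = (u^(n+1))⁻¹ * ψ (1/u) := by
      rw [hψdef]
      simp only
      rw [Real.rpow_neg hu.le, Real.rpow_neg hu1.le, Real.rpow_natCast, Real.rpow_natCast,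
        hq', hx, div_pow]
      field_simp
      ring
    have hψnn : 0 ≤ ψ (1/u) := by
      rw [hψdef]
      apply div_nonneg
      · exact Finset.sum_nonneg fun k _ => by positivity
      · positivity
    rw [hbase, Real.mul_rpow (by positivity) hψnn]
    congr 1
    have h3 : ((u ^ (n+1) : ℝ))⁻¹ = u ^ (-((n:ℝ)+1)) := by
      rw [← Real.rpow_natCast u (n+1), ← Real.rpow_neg hu.le]
      push_cast
      ring_nf
    rw [h3, ← Real.rpow_mul hu.le]
    rw [show (-((n:ℝ)+1)) * p = 1 by rw [hpdef]; field_simp]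
    exact Real.rpow_one u
  simp only [Function.comp]
  rw [slope_def_field, hψ0, Real.one_rpow, key]
  field_simp
  ring
end
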